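/- arXiv:2006.16200 — 7 statements merged into one kernel-verified Lean document; each statement's English description precedes it below -/
import Mathlib

section
/- For every positive integer k there exists a function f : ℝ → {−1, 1} that is (k+1)-piecewise constant and satisfies E_{z∼N(0,1)}[f(z)·z^t] = 0 for every integer t with 0 ≤ t < k. -/
open MeasureTheory ProbabilityTheory

/-- A function `f : ℝ → ℝ` is `m`-piecewise constant if there exist at most `m - 1`
breakpoints such that `f` is constant on each open interval of their complement
(equivalently, `f x = f y` whenever no breakpoint lies between `x` and `y`). -/
def PiecewiseConst (m : ℕ) (f : ℝ → ℝ) : Prop :=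
  ∃ n : ℕ, n ≤ m - 1 ∧ ∃ z : Fin n → ℝ,
    ∀ x y : ℝ, x ≤ y → (∀ i, z i ∉ Set.Icc x y) → f x = f y

section AuxHR

open Polynomial Filter Set Topology

local notation "γ" => gaussianReal 0 1

-- basic integrability of |z|^n against the standard gaussian
lemma aux_int_abs_pow (n : ℕ) : Integrable (fun z : ℝ => |z| ^ n) γ := by
  rw [gaussianReal_of_var_ne_zero 0 one_ne_zero]
  rw [integrable_withDensity_iff (measurable_gaussianPDF 0 1)
    (Eventually.of_forall fun x => ENNReal.ofReal_lt_top)]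
  have hhalf : (0:ℝ) < 1/2 := by norm_num
  have h2n : Integrable (fun x : ℝ => x ^ (2*n) * Real.exp (-(1/2) * x ^ 2)) := by
    have h := integrable_rpow_mul_exp_neg_mul_sq hhalf (s := ((2*n : ℕ) : ℝ))
      (lt_of_lt_of_le neg_one_lt_zero (by positivity))
    have he : (fun x : ℝ => x ^ ((2*n : ℕ) : ℝ) * Real.exp (-(1/2) * x ^ 2))
        = fun x : ℝ => x ^ (2*n) * Real.exp (-(1/2) * x ^ 2) :=
      funext fun x => by rw [Real.rpow_natCast]
    rwa [he] at h
  have h1 : Integrable (fun x : ℝ => Real.exp (-(1/2) * x ^ 2)) :=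
    integrable_exp_neg_mul_sq hhalf
  have hbig : Integrable (fun x : ℝ =>
      (x ^ (2*n) * Real.exp (-(1/2) * x ^ 2) + Real.exp (-(1/2) * x ^ 2))
        * (Real.sqrt (2 * Real.pi))⁻¹) := (h2n.add h1).mul_const _
  apply hbig.mono'
  · exact (((measurable_abs.pow_const n).mul
      (measurable_gaussianPDF 0 1).ennreal_toReal)).aestronglyMeasurable
  · filter_upwards with x
    have hpdf : (gaussianPDF 0 1 x).toReal = gaussianPDFReal 0 1 x := by
      rw [gaussianPDF]
      exact ENNReal.toReal_ofReal (gaussianPDFReal_nonneg 0 1 x)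
    rw [Real.norm_eq_abs, hpdf]
    have hg : gaussianPDFReal 0 1 x
        = Real.exp (-(1/2) * x ^ 2) * (Real.sqrt (2 * Real.pi))⁻¹ := by
      unfold gaussianPDFReal
      push_cast
      rw [mul_comm]
      ring_nf
    have heven : (0:ℝ) ≤ x ^ (2*n) := (even_two_mul n).pow_nonneg x
    have hx2 : |x| ^ n ≤ x ^ (2*n) + 1 := by
      rcases le_or_gt (|x|) 1 with h | h
      · have h1 : |x| ^ n ≤ 1 := pow_le_one₀ (abs_nonneg x) h
        linarith
      · have h1 : |x| ^ n ≤ |x| ^ (2*n) :=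
          pow_le_pow_right₀ h.le (by omega)
        have h2 : |x| ^ (2*n) = x ^ (2*n) := by
          rw [← abs_pow, abs_of_nonneg heven]
        linarith
    have habs : |(|x| ^ n * gaussianPDFReal 0 1 x)| = |x| ^ n * gaussianPDFReal 0 1 x := by
      rw [abs_of_nonneg]
      exact mul_nonneg (by positivity) (gaussianPDFReal_nonneg 0 1 x)
    rw [habs, hg]
    have hexp : (0:ℝ) < Real.exp (-(1/2) * x ^ 2) := Real.exp_pos _
    have hs : (0:ℝ) ≤ (Real.sqrt (2 * Real.pi))⁻¹ := by positivity
    calc |x| ^ n * (Real.exp (-(1/2) * x ^ 2) * (Real.sqrt (2 * Real.pi))⁻¹)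
        ≤ (x ^ (2*n) + 1) * (Real.exp (-(1/2) * x ^ 2) * (Real.sqrt (2 * Real.pi))⁻¹) := by
          apply mul_le_mul_of_nonneg_right hx2 (by positivity)
      _ = (x ^ (2*n) * Real.exp (-(1/2) * x ^ 2) + Real.exp (-(1/2) * x ^ 2))
            * (Real.sqrt (2 * Real.pi))⁻¹ := by ring

lemma aux_int_eval (p : Polynomial ℝ) : Integrable (fun z : ℝ => p.eval z) γ := by
  have h : ∀ z : ℝ, p.eval z = ∑ i ∈ Finset.range (p.natDegree + 1), p.coeff i * z ^ i :=
    fun z => eval_eq_sum_range (p := p) z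
  simp_rw [h]
  apply integrable_finset_sum
  intro i _
  have : Integrable (fun z : ℝ => z ^ i) γ := by
    apply (aux_int_abs_pow i).mono'
    · exact (continuous_pow i).aestronglyMeasurable
    · filter_upwards with z
      rw [Real.norm_eq_abs, abs_pow]
  exact this.const_mul _

lemma aux_int_abs_eval (p : Polynomial ℝ) : Integrable (fun z : ℝ => |p.eval z|) γ :=
  (aux_int_eval p).abs

lemma aux_finite_null {s : Set ℝ} (hs : s.Finite) : γ s = 0 :=
  gaussianReal_absolutelyContinuous 0 one_ne_zero (hs.measure_zero _)

noncomputable def Rp {k : ℕ} (c : Fin k → ℝ) : Polynomial ℝ :=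
  ∑ i : Fin k, C (c i) * X ^ (i : ℕ)

lemma Rp_add {k : ℕ} (c c' : Fin k → ℝ) : Rp (c + c') = Rp c + Rp c' := by
  unfold Rp
  rw [← Finset.sum_add_distrib]
  congr 1; funext i
  simp [C_add, add_mul]

lemma Rp_sub_eval {k : ℕ} (c c' : Fin k → ℝ) (z : ℝ) :
    (Rp c).eval z - (Rp c').eval z = (Rp (c - c')).eval z := by
  have : Rp c = Rp c' + Rp (c - c') := by rw [← Rp_add]; congr 1; abel
  rw [this]; simp

lemma Rp_smul {k : ℕ} (s : ℝ) (c : Fin k → ℝ) : Rp (s • c) = C s * Rp c := by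
  unfold Rp
  rw [Finset.mul_sum]
  congr 1; funext i
  simp [C_mul, mul_assoc]

lemma Rp_single {k : ℕ} (j : Fin k) (s : ℝ) :
    Rp (s • (Pi.single j 1 : Fin k → ℝ)) = C s * X ^ (j : ℕ) := by
  rw [Rp_smul]
  congr 1
  unfold Rp
  rw [Finset.sum_eq_single j]
  · simp
  · intro i _ hij
    simp [Pi.single_apply, hij]
  · intro h; exact absurd (Finset.mem_univ j) h

lemma Rp_natDegree_le {k : ℕ} (c : Fin k → ℝ) (hk : 0 < k) : (Rp c).natDegree ≤ k - 1 := by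
  apply natDegree_sum_le_of_forall_le
  intro i _
  apply le_trans (natDegree_C_mul_le _ _)
  rw [natDegree_X_pow]
  omega

lemma Rp_coeff_k {k : ℕ} (c : Fin k → ℝ) (hk : 0 < k) : (Rp c).coeff k = 0 := by
  apply coeff_eq_zero_of_natDegree_lt
  have := Rp_natDegree_le c hk
  omega

noncomputable def Nk {k : ℕ} (c : Fin k → ℝ) : ℝ := ∫ z, |(Rp c).eval z| ∂γ

noncomputable def Fk (k : ℕ) (c : Fin k → ℝ) : ℝ := ∫ z, |(X ^ k + Rp c).eval z| ∂γ

lemma Nk_nonneg {k : ℕ} (c : Fin k → ℝ) : 0 ≤ Nk c :=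
  integral_nonneg fun z => abs_nonneg _

lemma Fk_nonneg (k : ℕ) (c : Fin k → ℝ) : 0 ≤ Fk k c :=
  integral_nonneg fun z => abs_nonneg _

lemma master_lip {k : ℕ} (g : Polynomial ℝ) (c c' : Fin k → ℝ) :
    |(∫ z, |(g + Rp c).eval z| ∂γ) - (∫ z, |(g + Rp c').eval z| ∂γ)| ≤ Nk (c - c') := by
  have key : ∀ d d' : Fin k → ℝ,
      (∫ z, |(g + Rp d).eval z| ∂γ) - (∫ z, |(g + Rp d').eval z| ∂γ) ≤ Nk (d - d') := by
    intro d d'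
    unfold Nk
    rw [sub_le_iff_le_add,
      ← integral_add (aux_int_abs_eval (Rp (d - d'))) (aux_int_abs_eval (g + Rp d'))]
    apply integral_mono (aux_int_abs_eval _) ((aux_int_abs_eval _).add (aux_int_abs_eval _))
    intro z
    dsimp only
    simp only [eval_add]
    have h := Rp_sub_eval d d' z
    calc |g.eval z + (Rp d).eval z|
        = |(g.eval z + (Rp d').eval z) + (Rp (d - d')).eval z| := by rw [← h]; ring_nf
      _ ≤ |g.eval z + (Rp d').eval z| + |(Rp (d - d')).eval z| := abs_add_le _ _
      _ = |(Rp (d - d')).eval z| + |g.eval z + (Rp d').eval z| := by ring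
  rw [abs_sub_le_iff]
  constructor
  · exact key c c'
  · have h2 := key c' c
    have hsym : Nk (c' - c) = Nk (c - c') := by
      unfold Nk
      congr 1; funext z
      have h1 : c' - c = (-1 : ℝ) • (c - c') := by funext i; simp [neg_sub]
      rw [h1, Rp_smul]
      simp
    linarith

lemma Nk_le {k : ℕ} (d : Fin k → ℝ) :
    Nk d ≤ ‖d‖ * ∑ i : Fin k, ∫ z, |z| ^ (i : ℕ) ∂γ := by
  unfold Nk
  have hint : Integrable (fun z => ∑ i : Fin k, ‖d‖ * |z| ^ (i : ℕ)) γ :=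
    integrable_finset_sum _ fun i _ => (aux_int_abs_pow _).const_mul _
  have h1 : (∫ z, |(Rp d).eval z| ∂γ) ≤ ∫ z, ∑ i : Fin k, ‖d‖ * |z| ^ (i : ℕ) ∂γ := by
    apply integral_mono (aux_int_abs_eval _) hint
    intro z
    dsimp only
    have he : (Rp d).eval z = ∑ i : Fin k, d i * z ^ (i : ℕ) := by
      unfold Rp; simp [eval_finset_sum]
    rw [he]
    refine le_trans (Finset.abs_sum_le_sum_abs _ _) (Finset.sum_le_sum fun i _ => ?_)
    rw [abs_mul, abs_pow]
    apply mul_le_mul_of_nonneg_right _ (by positivity)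
    simpa [Real.norm_eq_abs] using norm_le_pi_norm d i
  rw [integral_finset_sum _ (fun i _ => (aux_int_abs_pow _).const_mul _)] at h1
  calc Nk d ≤ ∑ i : Fin k, ∫ z, ‖d‖ * |z| ^ (i : ℕ) ∂γ := h1
    _ = ‖d‖ * ∑ i : Fin k, ∫ z, |z| ^ (i : ℕ) ∂γ := by
        rw [Finset.mul_sum]
        congr 1; funext i
        rw [integral_const_mul]

lemma Rp_ne_zero {k : ℕ} {c : Fin k → ℝ} (hc : c ≠ 0) : Rp c ≠ 0 := by
  obtain ⟨j, hj⟩ : ∃ j, c j ≠ 0 := by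
    by_contra h
    push_neg at h
    exact hc (funext h)
  intro h0
  have hcoeff : (Rp c).coeff (j : ℕ) = c j := by
    unfold Rp
    rw [finset_sum_coeff]
    have heach : ∀ i : Fin k, (C (c i) * X ^ (i : ℕ)).coeff (j : ℕ)
        = if i = j then c i else 0 := by
      intro i
      rw [coeff_C_mul, coeff_X_pow]
      by_cases h : i = j
      · simp [h]
      · rw [if_neg (fun hh => h (Fin.ext (by omega))), if_neg h, mul_zero]
    simp_rw [heach]
    simp
  rw [h0] at hcoeff
  simp at hcoeff
  exact hj hcoeff.symm

lemma eval_pos_measure {p : Polynomial ℝ} (hp : p ≠ 0) :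
    0 < ∫ z, |p.eval z| ∂γ := by
  rw [integral_pos_iff_support_of_nonneg (fun z => abs_nonneg _) (aux_int_abs_eval p)]
  have hroots : γ {z : ℝ | p.eval z = 0} = 0 :=
    aux_finite_null (Polynomial.finite_setOf_isRoot hp)
  by_contra h
  push_neg at h
  have h0 : γ (Function.support fun z => |p.eval z|) = 0 := le_antisymm h zero_le
  have hcover : (Set.univ : Set ℝ) ⊆
      (Function.support fun z => |p.eval z|) ∪ {z : ℝ | p.eval z = 0} := by
    intro z _
    rcases eq_or_ne (p.eval z) 0 with h | h
    · exact Or.inr h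
    · exact Or.inl (by simp [Function.mem_support, abs_eq_zero, h])
  have := measure_mono (μ := γ) hcover
  rw [measure_univ] at this
  have hle := le_trans this (measure_union_le _ _)
  rw [h0, hroots] at hle
  simp only [add_zero, nonpos_iff_eq_zero] at hle
  exact one_ne_zero hle

lemma Nk_pos {k : ℕ} {c : Fin k → ℝ} (hc : c ≠ 0) : 0 < Nk c :=
  eval_pos_measure (Rp_ne_zero hc)

lemma Nk_smul {k : ℕ} (s : ℝ) (c : Fin k → ℝ) : Nk (s • c) = |s| * Nk c := by
  unfold Nk
  rw [← integral_const_mul]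
  congr 1; funext z
  rw [Rp_smul]
  simp [abs_mul]

lemma exists_eps (k : ℕ) (hk : 0 < k) :
    ∃ ε : ℝ, 0 < ε ∧ ∀ c : Fin k → ℝ, ε * ‖c‖ ≤ Nk c := by
  haveI : Nonempty (Fin k) := ⟨⟨0, hk⟩⟩
  set K : ℝ := ∑ i : Fin k, ∫ z, |z| ^ (i : ℕ) ∂γ with hK
  have hK0 : 0 ≤ K :=
    Finset.sum_nonneg fun i _ => integral_nonneg fun z => by positivity
  have hlip : ∀ c c' : Fin k → ℝ, |Nk c - Nk c'| ≤ K * ‖c - c'‖ := by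
    intro c c'
    have h := master_lip (0 : Polynomial ℝ) c c'
    simp only [zero_add] at h
    exact le_trans h ((Nk_le _).trans_eq (mul_comm _ _))
  have hcont : Continuous (Nk (k := k)) := by
    apply (LipschitzWith.of_dist_le_mul (K := K.toNNReal) ?_).continuous
    intro c c'
    rw [Real.dist_eq, dist_eq_norm, Real.coe_toNNReal K hK0]
    exact hlip c c'
  have hS : IsCompact (Metric.sphere (0 : Fin k → ℝ) 1) := isCompact_sphere _ _
  have hSne : (Metric.sphere (0 : Fin k → ℝ) 1).Nonempty :=
    NormedSpace.sphere_nonempty.mpr zero_le_one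
  obtain ⟨c₀, hc₀S, hmin⟩ := hS.exists_isMinOn hSne hcont.continuousOn
  have hc₀norm : ‖c₀‖ = 1 := by simpa using hc₀S
  have hc₀ne : c₀ ≠ 0 := by
    intro h; rw [h] at hc₀norm; simp at hc₀norm
  refine ⟨Nk c₀, Nk_pos hc₀ne, fun c => ?_⟩
  rcases eq_or_ne c 0 with rfl | hc
  · simp [Nk_nonneg]
  · have hn : ‖c‖ ≠ 0 := by simpa using hc
    set u : Fin k → ℝ := ‖c‖⁻¹ • c with hu
    have hun : ‖u‖ = 1 := by
      rw [hu, norm_smul, norm_inv, norm_norm, inv_mul_cancel₀ hn]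
    have hcu : c = ‖c‖ • u := by
      rw [hu, smul_smul, mul_inv_cancel₀ hn, one_smul]
    have h1 : Nk c₀ ≤ Nk u := hmin (by simpa using hun)
    calc Nk c₀ * ‖c‖ ≤ Nk u * ‖c‖ := by
          apply mul_le_mul_of_nonneg_right h1 (norm_nonneg c)
      _ = Nk c := by
          have h2 : Nk (‖c‖ • u) = ‖c‖ * Nk u := by
            rw [Nk_smul, abs_of_nonneg (norm_nonneg c)]
          rw [← hcu] at h2
          rw [h2, mul_comm]

lemma Fk_coercive (k : ℕ) (c : Fin k → ℝ) :
    Nk c - (∫ z, |z| ^ k ∂γ) ≤ Fk k c := by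
  have habs : Integrable (fun z : ℝ => |z| ^ k) γ := aux_int_abs_pow k
  rw [sub_le_iff_le_add]
  unfold Nk Fk
  rw [← integral_add (aux_int_abs_eval _) habs]
  apply integral_mono (aux_int_abs_eval _) ((aux_int_abs_eval _).add habs)
  intro z
  dsimp only
  have h1 : |(Rp c).eval z| = |(z ^ k + (Rp c).eval z) + (- z ^ k)| := by ring_nf
  calc |(Rp c).eval z| ≤ |z ^ k + (Rp c).eval z| + |(-(z ^ k))| := by
        rw [h1]; exact abs_add_le _ _
    _ = |(X ^ k + Rp c : Polynomial ℝ).eval z| + |z| ^ k := by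
        rw [abs_neg, abs_pow]
        simp
  
lemma exists_min (k : ℕ) (hk : 0 < k) : ∃ cs : Fin k → ℝ, ∀ c, Fk k cs ≤ Fk k c := by
  obtain ⟨ε, hε, heps⟩ := exists_eps k hk
  set M : ℝ := ∫ z, |z| ^ k ∂γ with hM
  have hM0 : 0 ≤ M := integral_nonneg fun z => by positivity
  set K : ℝ := ∑ i : Fin k, ∫ z, |z| ^ (i : ℕ) ∂γ with hK
  have hK0 : 0 ≤ K :=
    Finset.sum_nonneg fun i _ => integral_nonneg fun z => by positivity
  have hlip : ∀ c c' : Fin k → ℝ, |Fk k c - Fk k c'| ≤ K * ‖c - c'‖ := by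
    intro c c'
    exact le_trans (master_lip (X ^ k) c c') ((Nk_le _).trans_eq (mul_comm _ _))
  have hcont : Continuous (Fk k) := by
    apply (LipschitzWith.of_dist_le_mul (K := K.toNNReal) ?_).continuous
    intro c c'
    rw [Real.dist_eq, dist_eq_norm, Real.coe_toNNReal K hK0]
    exact hlip c c'
  set R₀ : ℝ := (Fk k 0 + M + 1) / ε with hR₀
  have hR₀0 : 0 ≤ R₀ := by
    apply div_nonneg _ hε.le
    have := Fk_nonneg k 0
    linarith
  have h0mem : (0 : Fin k → ℝ) ∈ Metric.closedBall (0 : Fin k → ℝ) R₀ := by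
    simpa using hR₀0
  obtain ⟨cs, hcsmem, hmin⟩ := (isCompact_closedBall (0 : Fin k → ℝ) R₀).exists_isMinOn
    ⟨0, h0mem⟩ hcont.continuousOn
  refine ⟨cs, fun c => ?_⟩
  by_cases hc : c ∈ Metric.closedBall (0 : Fin k → ℝ) R₀
  · exact hmin hc
  · have hnorm : R₀ < ‖c‖ := by
      by_contra h
      push_neg at h
      exact hc (by simpa [Metric.mem_closedBall, dist_zero_right] using h)
    have h1 : Fk k cs ≤ Fk k 0 := hmin h0mem
    have h2 : ε * ‖c‖ - M ≤ Fk k c := by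
      have := Fk_coercive k c
      have := heps c
      linarith
    have h3 : ε * R₀ = Fk k 0 + M + 1 := by
      rw [hR₀, mul_div_cancel₀ _ hε.ne']
    have h4 : ε * R₀ < ε * ‖c‖ := by
      exact mul_lt_mul_of_pos_left hnorm hε
    linarith

lemma abs_add_small (x y : ℝ) (h : |y| < |x|) :
    |x + y| - |x| = (if x < 0 then (-1:ℝ) else 1) * y := by
  rcases lt_or_ge x 0 with hx | hx
  · rw [if_pos hx, abs_of_neg hx]
    have hxy : x + y < 0 := by
      have h1 : y ≤ |y| := le_abs_self y
      have h2 : |x| = -x := abs_of_neg hx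
      linarith [h.le, h1]
    rw [abs_of_neg hxy]; ring
  · rw [if_neg (not_lt.mpr hx), abs_of_nonneg hx]
    have hxy : 0 ≤ x + y := by
      have h1 : -|y| ≤ y := neg_abs_le y
      have h2 : |x| = x := abs_of_nonneg hx
      linarith [h.le, h1]
    rw [abs_of_nonneg hxy]; ring

lemma first_order (k : ℕ) (hk : 0 < k) (cs : Fin k → ℝ)
    (hmin : ∀ c, Fk k cs ≤ Fk k c) (t : ℕ) (ht : t < k) :
    ∫ z, (if (X ^ k + Rp cs).eval z < 0 then (-1:ℝ) else 1) * z ^ t ∂γ = 0 := by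
  set p : Polynomial ℝ := X ^ k + Rp cs with hp
  set f : ℝ → ℝ := fun z => if p.eval z < 0 then (-1:ℝ) else 1 with hf
  set j : Fin k := ⟨t, ht⟩ with hj
  set e : Fin k → ℝ := Pi.single j 1 with he
  have hpert : ∀ s : ℝ, X ^ k + Rp (cs + s • e) = p + C s * X ^ t := by
    intro s
    rw [Rp_add, Rp_single]
    rw [hp]
    have : (j : ℕ) = t := rfl
    rw [this]
    ring
  have hpne : p ≠ 0 := by
    intro h0
    have hco : p.coeff k = 1 := by
      rw [hp, coeff_add, coeff_X_pow, if_pos rfl, Rp_coeff_k cs hk, add_zero]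
    rw [h0] at hco
    simp at hco
  set G : ℝ → ℝ → ℝ := fun s z => (|p.eval z + s * z ^ t| - |p.eval z|) / s with hG
  set D : ℝ := ∫ z, f z * z ^ t ∂γ with hD
  -- integrability of the shifted polynomials
  have hint : ∀ s : ℝ, Integrable (fun z => |p.eval z + s * z ^ t|) γ := by
    intro s
    have : (fun z => |p.eval z + s * z ^ t|) = fun z => |(p + C s * X ^ t).eval z| := by
      funext z; simp
    rw [this]
    exact aux_int_abs_eval _
  -- Step B : ratio of F values
  have hratio : ∀ s : ℝ, s ≠ 0 → (∫ z, G s z ∂γ) = (Fk k (cs + s • e) - Fk k cs) / s := by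
    intro s hs
    rw [hG]
    rw [integral_div]
    congr 1
    rw [integral_sub (hint s) (aux_int_abs_eval p)]
    congr 1
    · unfold Fk
      rw [hpert s]
      congr 1; funext z; simp
  -- Step A : dominated convergence
  have hDCT : Tendsto (fun s => ∫ z, G s z ∂γ) (𝓝[≠] (0:ℝ)) (𝓝 D) := by
    apply tendsto_integral_filter_of_dominated_convergence (fun z => |z| ^ t)
    · filter_upwards with s
      apply Continuous.aestronglyMeasurable
      exact ((p.continuous.add ((continuous_const.mul (continuous_pow t)))).abs.sub
        p.continuous.abs).div_const s
    · filter_upwards [self_mem_nhdsWithin] with s hs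
      have hs0 : s ≠ 0 := hs
      filter_upwards with z
      rw [hG, Real.norm_eq_abs, abs_div]
      rw [div_le_iff₀ (abs_pos.mpr hs0)]
      have hb := abs_abs_sub_abs_le_abs_sub (p.eval z + s * z ^ t) (p.eval z)
      have hb2 : |p.eval z + s * z ^ t - p.eval z| = |z| ^ t * |s| := by
        rw [show p.eval z + s * z ^ t - p.eval z = s * z ^ t by ring, abs_mul, abs_pow]
        ring
      exact le_trans hb (le_of_eq hb2)
    · exact aux_int_abs_pow t
    · have hnull : ∀ᵐ z ∂γ, p.eval z ≠ 0 := by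
        rw [ae_iff]
        simp only [not_not]
        exact aux_finite_null (Polynomial.finite_setOf_isRoot hpne)
      filter_upwards [hnull] with z hz
      have hev : ∀ᶠ s in 𝓝[≠] (0:ℝ), G s z = f z * z ^ t := by
        have h1 : ∀ᶠ s in 𝓝 (0:ℝ), |s * z ^ t| < |p.eval z| := by
          have hc : Tendsto (fun s : ℝ => |s * z ^ t|) (𝓝 0) (𝓝 |(0:ℝ) * z ^ t|) :=
            ((continuous_id.mul continuous_const).abs).tendsto 0
        
          have h0 : |(0:ℝ) * z ^ t| = 0 := by simp
          rw [h0] at hc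
          exact hc.eventually_lt_const (abs_pos.mpr hz)
        filter_upwards [eventually_nhdsWithin_of_eventually_nhds h1,
          self_mem_nhdsWithin] with s hs1 hs2
        have hs0 : s ≠ 0 := hs2
        rw [hG, hf]
        dsimp only
        rw [abs_add_small (p.eval z) (s * z ^ t) hs1]
        field_simp
      exact tendsto_const_nhds.congr' (Filter.EventuallyEq.symm hev)
  -- Step C : D ≥ 0 from the right
  have hDge : 0 ≤ D := by
    have hmono : 𝓝[>] (0:ℝ) ≤ 𝓝[≠] (0:ℝ) :=
      nhdsWithin_mono 0 (fun s hs => ne_of_gt hs)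
    have hT : Tendsto (fun s => ∫ z, G s z ∂γ) (𝓝[>] (0:ℝ)) (𝓝 D) := hDCT.mono_left hmono
    apply ge_of_tendsto hT
    filter_upwards [self_mem_nhdsWithin] with s hs
    rw [hratio s (ne_of_gt hs)]
    apply div_nonneg _ hs.le
    have := hmin (cs + s • e)
    linarith
  -- Step D : D ≤ 0 from the left
  have hDle : D ≤ 0 := by
    have hmono : 𝓝[<] (0:ℝ) ≤ 𝓝[≠] (0:ℝ) :=
      nhdsWithin_mono 0 (fun s hs => ne_of_lt hs)
    have hT : Tendsto (fun s => ∫ z, G s z ∂γ) (𝓝[<] (0:ℝ)) (𝓝 D) := hDCT.mono_left hmono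
    apply le_of_tendsto hT
    filter_upwards [self_mem_nhdsWithin] with s hs
    rw [hratio s (ne_of_lt hs)]
    apply div_nonpos_of_nonneg_of_nonpos
    · have := hmin (cs + s • e)
      linarith
    · exact hs.le
  exact le_antisymm hDle hDge

end AuxHR

/-- For every positive integer `k` there exists a `(k+1)`-piecewise constant function
`f : ℝ → {-1, 1}` with `E_{z ∼ N(0,1)}[f(z) z^t] = 0` for all integers `0 ≤ t < k`. -/
theorem stmt0 (k : ℕ) (hk : 0 < k) :
    ∃ f : ℝ → ℝ, (∀ z, f z = 1 ∨ f z = -1) ∧ PiecewiseConst (k + 1) f ∧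
      ∀ t : ℕ, t < k → ∫ z, f z * z ^ t ∂(gaussianReal 0 1) = 0 := by
  open Polynomial Filter Set Topology in
  obtain ⟨cs, hmin⟩ := exists_min k hk
  set p : Polynomial ℝ := X ^ k + Rp cs with hp
  have hpne : p ≠ 0 := by
    intro h0
    have hco : p.coeff k = 1 := by
      rw [hp, coeff_add, coeff_X_pow, if_pos rfl, Rp_coeff_k cs hk, add_zero]
    rw [h0] at hco
    simp at hco
  have hdeg : p.natDegree ≤ k := by
    apply le_trans (natDegree_add_le _ _)
    apply max_le
    · rw [natDegree_X_pow]
    · exact le_trans (Rp_natDegree_le cs hk) (by omega)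
  refine ⟨fun z => if p.eval z < 0 then (-1:ℝ) else 1, ?_, ?_, ?_⟩
  · intro z
    by_cases h : p.eval z < 0
    · exact Or.inr (by simp [h])
    · exact Or.inl (by simp [h])
  · refine ⟨p.roots.toFinset.card, ?_, ?_⟩
    · have h1 := p.roots.toFinset_card_le
      have h2 := p.card_roots'
      omega
    · refine ⟨fun i => ((p.roots.toFinset.equivFin.symm i : p.roots.toFinset) : ℝ), ?_⟩
      intro x y hxy hno
      have hroot : ∀ r ∈ Set.Icc x y, p.eval r ≠ 0 := by
        intro r hr hr0
        have hmem : r ∈ p.roots.toFinset := by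
          rw [Multiset.mem_toFinset, mem_roots']
          exact ⟨hpne, hr0⟩
        have h2 := hno (p.roots.toFinset.equivFin ⟨r, hmem⟩)
        simp only [Equiv.symm_apply_apply] at h2
        exact h2 hr
      dsimp only
      by_cases hx : p.eval x < 0 <;> by_cases hy : p.eval y < 0
      · simp [hx, hy]
      · exfalso
        have h0 : (0:ℝ) ∈ Set.Icc (p.eval x) (p.eval y) := ⟨hx.le, not_lt.mp hy⟩
        obtain ⟨r, hr, hval⟩ := intermediate_value_Icc hxy p.continuous.continuousOn h0
        exact hroot r hr hval
      · exfalso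
        have h0 : (0:ℝ) ∈ Set.Icc (p.eval y) (p.eval x) := ⟨hy.le, not_lt.mp hx⟩
        obtain ⟨r, hr, hval⟩ := intermediate_value_Icc' hxy p.continuous.continuousOn h0
        exact hroot r hr hval
      · simp [hx, hy]
  · intro t ht
    exact first_order k hk cs hmin t ht
end

section
/- For every real constant c with 0 < c < 1/2 there exist constants a > 0 and C > 0 (depending only on c) such that for every sufficiently large integer d there exists a set S of unit vectors in ℝ^d with |S| ≥ 2^{a·d^c} and |⟨u, v⟩| ≤ C·d^{c−1/2} for every pair of distinct vectors u, v ∈ S. -/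
set_option maxHeartbeats 1000000

open MeasureTheory RealInnerProductSpace

open Polynomial Finset in
lemma construction (p k d : ℕ) (hp : p.Prime) (hk1 : 1 ≤ k) (hkp : k ≤ p)
    (hpd : p * p ≤ d) :
    ∃ S : Finset (EuclideanSpace ℝ (Fin d)),
      S.card = p ^ k ∧ (∀ v ∈ S, ‖v‖ = 1) ∧
      ∀ u ∈ S, ∀ v ∈ S, u ≠ v → |⟪u, v⟫| ≤ ((k : ℝ) - 1) / p := by
  haveI : Fact p.Prime := ⟨hp⟩
  have hp0 : 0 < p := hp.pos
  have hcard : Fintype.card (ZMod p × ZMod p) ≤ Fintype.card (Fin d) := by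
    simp [ZMod.card, hpd]
  obtain ⟨ι⟩ := Function.Embedding.nonempty_of_card_le hcard
  classical
  set P : (Fin k → ZMod p) → Polynomial (ZMod p) :=
    (fun f => ∑ i : Fin k, C (f i) * X ^ (i : ℕ)) with hP
  set vec : (Fin k → ZMod p) → EuclideanSpace ℝ (Fin d) :=
    (fun f => (Real.sqrt p)⁻¹ • ∑ x : ZMod p,
      EuclideanSpace.single (ι (x, (P f).eval x)) (1:ℝ)) with hvec
  set A : (Fin k → ZMod p) → (Fin k → ZMod p) → Finset (ZMod p) :=
    (fun f g => univ.filter fun x : ZMod p => (P f).eval x = (P g).eval x) with hA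
  -- inner product formula
  have hinner : ∀ f g, ⟪vec f, vec g⟫ = ((A f g).card : ℝ) / p := by
    intro f g
    rw [hvec]
    simp only
    rw [real_inner_smul_left, real_inner_smul_right, sum_inner]
    have : ∀ x : ZMod p,
        ⟪EuclideanSpace.single (ι (x, (P f).eval x)) (1:ℝ),
          ∑ y : ZMod p, EuclideanSpace.single (ι (y, (P g).eval y)) (1:ℝ)⟫ =
        if (P f).eval x = (P g).eval x then (1:ℝ) else 0 := by
      intro x
      rw [inner_sum]
      have : ∀ y : ZMod p,
          ⟪EuclideanSpace.single (ι (x, (P f).eval x)) (1:ℝ),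
            EuclideanSpace.single (ι (y, (P g).eval y)) (1:ℝ)⟫ =
          if y = x ∧ (P g).eval y = (P f).eval x then (1:ℝ) else 0 := by
        intro y
        have key : (ι (x, (P f).eval x) = ι (y, (P g).eval y)) ↔
            (y = x ∧ (P g).eval y = (P f).eval x) := by
          rw [ι.apply_eq_iff_eq, Prod.mk.injEq]
          constructor
          · rintro ⟨rfl, h⟩; exact ⟨rfl, h.symm⟩
          · rintro ⟨rfl, h⟩; exact ⟨rfl, h.symm⟩
        rw [EuclideanSpace.inner_single_left, EuclideanSpace.single_apply]
        simp [key]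
      simp_rw [this, ite_and]
      rw [Finset.sum_ite_eq' univ x]
      simp [eq_comm]
    simp_rw [this]
    rw [Finset.sum_boole]
    rw [hA]
    have hsq : (Real.sqrt p)⁻¹ * ((Real.sqrt p)⁻¹ * ((A f g).card : ℝ)) =
        ((A f g).card : ℝ) / p := by
      rw [← mul_assoc, ← mul_inv, Real.mul_self_sqrt (by positivity)]
      ring
    simpa [hA] using hsq
  have hself : ∀ f, A f f = univ := by
    intro f; rw [hA]; simp
  have hnorm : ∀ f, ‖vec f‖ = 1 := by
    intro f
    have h1 : ⟪vec f, vec f⟫ = 1 := by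
      rw [hinner, hself]
      rw [Finset.card_univ, ZMod.card]
      field_simp
    have h2 : ⟪vec f, vec f⟫ = ‖vec f‖ ^ 2 := real_inner_self_eq_norm_sq _
    nlinarith [norm_nonneg (vec f)]
  -- coefficients of P
  have hcoeff : ∀ f (i : Fin k), (P f).coeff (i : ℕ) = f i := by
    intro f i
    rw [hP]
    simp only [finset_sum_coeff, coeff_C_mul, coeff_X_pow, mul_ite, mul_one, mul_zero]
    rw [Finset.sum_eq_single i (fun b _ hb => by simp [Fin.val_eq_val, hb, Ne.symm hb]) (by simp)]
    simp
  -- agreement bound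
  have hagree : ∀ f g, f ≠ g → (A f g).card < k := by
    intro f g hfg
    obtain ⟨i, hi⟩ := Function.ne_iff.mp hfg
    have hne : P f - P g ≠ 0 := by
      intro h0
      apply hi
      have := hcoeff f i
      have h2 := hcoeff g i
      have h3 : (P f - P g).coeff (i : ℕ) = 0 := by rw [h0]; simp
      rw [coeff_sub, this, h2, sub_eq_zero] at h3
      exact h3
    have hdeg : (P f - P g).natDegree ≤ k - 1 := by
      apply le_trans (natDegree_sub_le _ _)
      apply max_le <;>
      · apply Polynomial.natDegree_sum_le_of_forall_le
        intro i _
        exact le_trans (natDegree_C_mul_le _ _)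
          (by rw [natDegree_X_pow]; exact Nat.le_sub_one_of_lt i.2)
    have hsub : A f g ⊆ (P f - P g).roots.toFinset := by
      intro x hx
      rw [hA] at hx
      simp only [Finset.mem_filter] at hx
      rw [Multiset.mem_toFinset, mem_roots hne]
      simp [IsRoot, sub_eq_zero, hx.2]
    calc (A f g).card ≤ (P f - P g).roots.toFinset.card := Finset.card_le_card hsub
      _ ≤ Multiset.card (P f - P g).roots := Multiset.toFinset_card_le _
      _ ≤ (P f - P g).natDegree := card_roots' _
      _ ≤ k - 1 := hdeg
      _ < k := Nat.sub_lt hk1 one_pos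
  -- injectivity
  have hinj : Function.Injective vec := by
    intro f g hfg
    by_contra hne
    have h1 : ⟪vec f, vec g⟫ = 1 := by
      rw [hfg, hinner, hself, Finset.card_univ, ZMod.card]; field_simp
    rw [hinner] at h1
    have h2 : ((A f g).card : ℝ) < p := by
      have := hagree f g hne
      exact_mod_cast lt_of_lt_of_le this hkp
    have hppos : (0:ℝ) < p := by exact_mod_cast hp0
    rw [div_eq_one_iff_eq (ne_of_gt hppos)] at h1
    linarith
  refine ⟨Finset.image vec univ, ?_, ?_, ?_⟩
  · rw [Finset.card_image_of_injective _ hinj]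
    simp [ZMod.card]
  · intro v hv
    obtain ⟨f, _, rfl⟩ := Finset.mem_image.mp hv
    exact hnorm f
  · intro u hu v hv huv
    obtain ⟨f, _, rfl⟩ := Finset.mem_image.mp hu
    obtain ⟨g, _, rfl⟩ := Finset.mem_image.mp hv
    have hfg : f ≠ g := fun h => huv (by rw [h])
    rw [hinner]
    have hppos : (0:ℝ) < p := by exact_mod_cast hp0
    rw [abs_of_nonneg (by positivity)]
    have hcard2 : ((A f g).card : ℝ) ≤ (k:ℝ) - 1 := by
      have h1 : (A f g).card + 1 ≤ k := hagree f g hfg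
      have h2 : ((A f g).card : ℝ) + 1 ≤ (k:ℝ) := by exact_mod_cast h1
      linarith
    gcongr

/-- For every `0 < c < 1/2` there exist `a, C > 0` such that for all sufficiently
large `d` there is a set of at least `2 ^ (a d^c)` unit vectors in `ℝ^d` whose pairwise
inner products are at most `C d^(c - 1/2)` in absolute value. -/
theorem stmt2 (c : ℝ) (hc0 : 0 < c) (hc1 : c < 1 / 2) :
    ∃ a C : ℝ, 0 < a ∧ 0 < C ∧ ∃ D : ℕ, ∀ d : ℕ, D ≤ d →
      ∃ S : Finset (EuclideanSpace ℝ (Fin d)),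
        (2 : ℝ) ^ (a * (d : ℝ) ^ c) ≤ (S.card : ℝ) ∧
        (∀ v ∈ S, ‖v‖ = 1) ∧
        ∀ u ∈ S, ∀ v ∈ S, u ≠ v → |⟪u, v⟫| ≤ C * (d : ℝ) ^ (c - 1 / 2) := by
  refine ⟨1, 8, one_pos, by norm_num, ?_⟩
  have hev1 : ∀ᶠ x : ℝ in Filter.atTop, x ^ (c - 1/2) ≤ 1/8 := by
    have h := tendsto_rpow_neg_atTop (by linarith : (0:ℝ) < 1/2 - c)
    have h0 : -(1/2 - c) = c - 1/2 := by ring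
    rw [h0] at h
    exact h.eventually (eventually_le_nhds (by norm_num))
  have hev2 : ∀ᶠ d : ℕ in Filter.atTop, ((d:ℝ)) ^ (c - 1/2) ≤ 1/8 :=
    (tendsto_natCast_atTop_atTop (R := ℝ)).eventually hev1
  obtain ⟨D, hD⟩ := Filter.eventually_atTop.mp (hev2.and (Filter.eventually_ge_atTop 4))
  refine ⟨D, fun d hd => ?_⟩
  obtain ⟨hdr, hd4⟩ := hD d hd
  set x : ℝ := (d : ℝ) with hxdef
  have hx0 : (0:ℝ) < x := by
    rw [hxdef]; exact_mod_cast Nat.lt_of_lt_of_le (by norm_num) hd4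
  have hx1 : (1:ℝ) ≤ x := by rw [hxdef]; exact_mod_cast Nat.le_trans (by norm_num) hd4
  -- choose the prime
  set m := Nat.sqrt d with hm
  have hm2 : 2 ≤ m := Nat.le_sqrt.mpr (by omega)
  set n := m / 2 with hn
  obtain ⟨p, hp, hnp, hp2n⟩ := Nat.exists_prime_lt_and_le_two_mul n (by omega)
  have hpm : p ≤ m := le_trans hp2n (by omega)
  have hpd : p * p ≤ d := le_trans (Nat.mul_le_mul hpm hpm) (Nat.sqrt_le d)
  have hp2 : 2 ≤ p := by omega
  -- real lower bound on p
  have hsqx : Real.sqrt x < 2 * p := by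
    have h1 : (d : ℝ) < ((m + 1 : ℕ) : ℝ) ^ 2 := by
      exact_mod_cast (by simpa [pow_two] using Nat.lt_succ_sqrt d : d < (m+1) ^ 2)
    have h2 : Real.sqrt x < ((m + 1 : ℕ) : ℝ) := by
      rw [show Real.sqrt x = Real.sqrt d from rfl]
      exact (Real.sqrt_lt' (by positivity)).mpr h1
    have h3 : ((m + 1 : ℕ) : ℝ) ≤ 2 * p := by
      have : m + 1 ≤ 2 * p := by omega
      exact_mod_cast this
    linarith
  have hsx0 : 0 < Real.sqrt x := Real.sqrt_pos.mpr hx0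
  -- choose k
  set k := ⌈x ^ c⌉₊ with hk
  have hxc0 : (0:ℝ) < x ^ c := Real.rpow_pos_of_pos hx0 c
  have hk1 : 1 ≤ k := Nat.one_le_ceil_iff.mpr hxc0
  have hkx : (k:ℝ) < x ^ c + 1 := Nat.ceil_lt_add_one hxc0.le
  have hxk : x ^ c ≤ (k:ℝ) := Nat.le_ceil _
  have h1c : (1:ℝ) ≤ x ^ c := Real.one_le_rpow hx1 hc0.le
  -- x^c = x^(c-1/2) * sqrt x
  have hxc : x ^ c = x ^ (c - 1/2) * Real.sqrt x := by
    rw [Real.sqrt_eq_rpow, ← Real.rpow_add hx0]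
    norm_num
  have hxc8 : x ^ c ≤ Real.sqrt x / 8 := by
    rw [hxc]
    have := mul_le_mul_of_nonneg_right hdr hsx0.le
    linarith
  have hkp : k ≤ p := by
    have : (k:ℝ) < (p:ℝ) := by
      have hpr : Real.sqrt x / 2 < (p:ℝ) := by linarith
      linarith
    exact_mod_cast this.le
  obtain ⟨S, hScard, hSnorm, hSinner⟩ := construction p k d hp hk1 hkp hpd
  have hpR : (0:ℝ) < (p:ℝ) := by exact_mod_cast hp.pos
  refine ⟨S, ?_, hSnorm, ?_⟩
  · -- cardinality
    have hc1' : (2:ℝ) ^ (1 * x ^ c) ≤ (2:ℝ) ^ ((k:ℕ):ℝ) := by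
      rw [one_mul]
      exact Real.rpow_le_rpow_of_exponent_le (by norm_num) hxk
    have hc2' : (2:ℝ) ^ ((k:ℕ):ℝ) = ((2:ℝ)) ^ (k:ℕ) := Real.rpow_natCast 2 k
    have hc3' : ((2:ℝ)) ^ (k:ℕ) ≤ ((p:ℝ)) ^ (k:ℕ) :=
      pow_le_pow_left₀ (by norm_num) (by exact_mod_cast hp2) k
    have hc4' : (S.card : ℝ) = ((p:ℝ)) ^ (k:ℕ) := by rw [hScard]; push_cast; ring
    rw [hc4']
    calc (2:ℝ) ^ (1 * x ^ c) ≤ (2:ℝ) ^ ((k:ℕ):ℝ) := hc1'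
      _ = ((2:ℝ)) ^ (k:ℕ) := hc2'
      _ ≤ ((p:ℝ)) ^ (k:ℕ) := hc3'
  · -- inner products
    intro u hu v hv huv
    refine (hSinner u hu v hv huv).trans ?_
    have h1 : ((k:ℝ) - 1) / p ≤ x ^ c / p := by gcongr; linarith
    have h2 : x ^ c / p ≤ x ^ c / (Real.sqrt x / 2) := by
      apply div_le_div_of_nonneg_left hxc0.le (by positivity)
      linarith
    have h3 : x ^ c / (Real.sqrt x / 2) = 2 * x ^ (c - 1/2) := by
      rw [hxc]; field_simp
    have h4 : (0:ℝ) ≤ x ^ (c - 1/2) := (Real.rpow_pos_of_pos hx0 _).le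
    calc ((k:ℝ) - 1) / p ≤ x ^ c / p := h1
      _ ≤ x ^ c / (Real.sqrt x / 2) := h2
      _ = 2 * x ^ (c - 1/2) := h3
      _ ≤ 8 * x ^ (c - 1/2) := by linarith
end

section
/- Let k ≥ 1 be an integer, let f : ℝ → {−1, 1} be (k+1)-piecewise constant with E_{z∼N(0,1)}[f(z)·z^t] = 0 for every integer 0 ≤ t < k, let d ≥ 1, and let v ∈ ℝ^d be a unit vector. Then there exist β ∈ ℝ and b ∈ {−1, 1} such that the halfspace σ(x) = b·sign(⟨v, x⟩ − β) satisfies E_{x∼N(0,I_d)}[f(⟨v, x⟩)·σ(x)] ≥ 1/(2k). -/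
open MeasureTheory ProbabilityTheory RealInnerProductSpace Real
open scoped ENNReal NNReal

/-- The standard Gaussian measure on `ℝ^d`. -/
noncomputable def stdGaussianPi (d : ℕ) : Measure (EuclideanSpace ℝ (Fin d)) :=
  volume.withDensity fun x =>
    ENNReal.ofReal (Real.exp (-‖x‖ ^ 2 / 2) / (2 * π) ^ ((d : ℝ) / 2))

/-- `sign u = 1` if `u ≥ 0` and `-1` otherwise. -/
noncomputable def sgn (u : ℝ) : ℝ := if 0 ≤ u then 1 else -1

lemma gauss_noAtoms : NullSingletonClass (gaussianReal 0 1) := by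
  constructor
  intro a
  exact gaussianReal_absolutelyContinuous (0:ℝ) one_ne_zero (by simp)

lemma measurable_pc (f : ℝ → ℝ) (hf_val : ∀ z, f z = 1 ∨ f z = -1)
    (S : Finset ℝ)
    (hP : ∀ x y : ℝ, x ≤ y → (∀ t ∈ S, t ∉ Set.Icc x y) → f x = f y) :
    Measurable f := by
  set A : Set ℝ := {x | f x = 1} with hA
  have hopen : IsOpen (A \ ↑S) := by
    rw [Metric.isOpen_iff]
    intro x hx
    obtain ⟨ε, hε, hball⟩ := Metric.isOpen_iff.mp (S.finite_toSet.isClosed.isOpen_compl) x hx.2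
    refine ⟨ε, hε, fun y hy => ?_⟩
    have hyx : |y - x| < ε := by rwa [Metric.mem_ball, Real.dist_eq] at hy
    have hfy : f y = f x := by
      rcases le_total y x with h | h
      · refine hP y x h fun t ht hmem => hball ?_ ht
        rw [Metric.mem_ball, Real.dist_eq]
        rcases hmem with ⟨h1, h2⟩
        rw [abs_sub_lt_iff]
        rcases abs_cases (y - x) with ⟨he, _⟩ | ⟨he, _⟩ <;> constructor <;> linarith
      · refine (hP x y h fun t ht hmem => hball ?_ ht).symm
        rw [Metric.mem_ball, Real.dist_eq]
        rcases hmem with ⟨h1, h2⟩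
        rw [abs_sub_lt_iff]
        rcases abs_cases (y - x) with ⟨he, _⟩ | ⟨he, _⟩ <;> constructor <;> linarith
    exact ⟨by rw [hA, Set.mem_setOf_eq, hfy]; exact hx.1, fun hyS => (hball hy) hyS⟩
  have hAm : MeasurableSet A := by
    have : A = (A \ ↑S) ∪ (A ∩ ↑S) := by
      ext t; by_cases ht : t ∈ (↑S : Set ℝ) <;> simp [ht]
    rw [this]
    exact hopen.measurableSet.union
      ((S.finite_toSet.subset Set.inter_subset_right).measurableSet)
  have hfeq : f = fun x => if x ∈ A then (1:ℝ) else -1 := by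
    funext x
    rcases hf_val x with h | h
    · simp [hA, h]
    · have : x ∉ A := by rw [hA]; simp [h]; norm_num
      simp [this, h]
  rw [hfeq]
  exact Measurable.ite hAm measurable_const measurable_const

lemma core (k : ℕ) (hk : 1 ≤ k) (f : ℝ → ℝ)
    (hf_val : ∀ z, f z = 1 ∨ f z = -1)
    (S : Finset ℝ) (hcard : S.card ≤ k)
    (hP : ∀ x y : ℝ, x ≤ y → (∀ t ∈ S, t ∉ Set.Icc x y) → f x = f y)
    (hzero : ∫ z, f z ∂(gaussianReal 0 1) = 0) :
    ∃ β b : ℝ, (b = 1 ∨ b = -1) ∧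
      1 / (2 * (k : ℝ)) ≤ ∫ z, f z * (b * sgn (z - β)) ∂(gaussianReal 0 1) := by
  set μ : Measure ℝ := gaussianReal 0 1 with hμ
  haveI : IsProbabilityMeasure μ := by rw [hμ]; infer_instance
  haveI : NullSingletonClass μ := gauss_noAtoms
  have hfm : Measurable f := measurable_pc f hf_val S hP
  have habs : ∀ z, |f z| = 1 := fun z => by rcases hf_val z with h | h <;> simp [h]
  have hfi : Integrable f μ := by
    refine Integrable.mono' (integrable_const 1) hfm.aestronglyMeasurable ?_
    exact Filter.Eventually.of_forall fun z => by rw [Real.norm_eq_abs, habs]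
  have hconst_int : ∀ (I : Set ℝ) (pt : ℝ), MeasurableSet I → (∀ x ∈ I, f x = f pt) →
      |∫ z in I, f z ∂μ| = (μ I).toReal := by
    intro I pt hI hc
    rw [setIntegral_congr_fun hI hc, setIntegral_const, smul_eq_mul, abs_mul, habs,
      abs_of_nonneg measureReal_nonneg, mul_one, measureReal_def]
  rcases Nat.eq_zero_or_pos S.card with hm0 | hmpos
  · exfalso
    have hS : S = ∅ := Finset.card_eq_zero.mp hm0
    have hconst : ∀ x, f x = f 0 := by
      intro x
      rcases le_total x 0 with h | h
      · exact hP x 0 h (by simp [hS])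
      · exact (hP 0 x h (by simp [hS])).symm
    have : ∫ z, f z ∂μ = f 0 := by
      rw [show f = fun _ => f 0 from funext hconst, integral_const]
      simp
    rcases hf_val 0 with h | h <;> rw [hzero] at this <;> rw [h] at this <;> norm_num at this
  -- main case
  set m := S.card with hm
  let s : Fin m → ℝ := fun j => ((S.orderIsoOfFin rfl j : {x // x ∈ S}) : ℝ)
  have hs_mono : StrictMono s := fun a b h => by
    exact_mod_cast (S.orderIsoOfFin rfl).lt_iff_lt.mpr h
  have hs_mem : ∀ j, s j ∈ S := fun j => (S.orderIsoOfFin rfl j).2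
  have hs_surj : ∀ t ∈ S, ∃ j, s j = t := fun t ht =>
    ⟨(S.orderIsoOfFin rfl).symm ⟨t, ht⟩,
      congrArg Subtype.val ((S.orderIsoOfFin rfl).apply_symm_apply ⟨t, ht⟩)⟩
  have hm1 : m - 1 < m := by omega
  set j0 : Fin m := ⟨0, hmpos⟩ with hj0
  set jmax : Fin m := ⟨m - 1, hm1⟩ with hjmax
  have hmin : ∀ t ∈ S, s j0 ≤ t := by
    intro t ht
    obtain ⟨j, rfl⟩ := hs_surj t ht
    exact hs_mono.monotone (by simp [hj0, Fin.le_def])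
  have hmax : ∀ t ∈ S, t ≤ s jmax := by
    intro t ht
    obtain ⟨j, rfl⟩ := hs_surj t ht
    refine hs_mono.monotone ?_
    rw [Fin.le_def]
    have := j.isLt
    show (j : ℕ) ≤ m - 1
    omega
  -- constancy on pieces
  have Cio : ∀ x ∈ Set.Iio (s j0), f x = f (s j0 - 1) := by
    intro x hx
    rw [Set.mem_Iio] at hx
    rcases le_total x (s j0 - 1) with h | h
    · exact hP x _ h fun t ht hmem => by
        have := hmin t ht; rw [Set.mem_Icc] at hmem; linarith
    · exact (hP _ x h fun t ht hmem => by
        have := hmin t ht; rw [Set.mem_Icc] at hmem; linarith).symm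
  have Coi : ∀ x ∈ Set.Ioi (s jmax), f x = f (s jmax + 1) := by
    intro x hx
    rw [Set.mem_Ioi] at hx
    rcases le_total x (s jmax + 1) with h | h
    · exact hP x _ h fun t ht hmem => by
        have := hmax t ht; rw [Set.mem_Icc] at hmem; linarith
    · exact (hP _ x h fun t ht hmem => by
        have := hmax t ht; rw [Set.mem_Icc] at hmem; linarith).symm
  have Cmid : ∀ a b : Fin m, (a : ℕ) + 1 = (b : ℕ) →
      ∀ x ∈ Set.Ioo (s a) (s b), f x = f ((s a + s b) / 2) := by
    intro a b hab x hx
    have hab' : s a < s b := hs_mono (by rw [Fin.lt_def]; omega)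
    have hno : ∀ t ∈ S, t ∉ Set.Ioo (s a) (s b) := by
      intro t ht hmem
      obtain ⟨j, rfl⟩ := hs_surj t ht
      rw [Set.mem_Ioo] at hmem
      have h1 : a < j := hs_mono.lt_iff_lt.mp hmem.1
      have h2 : j < b := hs_mono.lt_iff_lt.mp hmem.2
      rw [Fin.lt_def] at h1 h2; omega
    rw [Set.mem_Ioo] at hx
    have hmid : s a < (s a + s b) / 2 ∧ (s a + s b) / 2 < s b := by constructor <;> linarith
    rcases le_total x ((s a + s b) / 2) with h | h
    · refine hP x _ h fun u hu hmem => hno u hu ?_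
      rw [Set.mem_Icc] at hmem
      rw [Set.mem_Ioo]
      constructor <;> linarith [hmid.1, hmid.2, hx.1, hx.2]
    · refine (hP _ x h fun u hu hmem => hno u hu ?_).symm
      rw [Set.mem_Icc] at hmem
      rw [Set.mem_Ioo]
      constructor <;> linarith [hmid.1, hmid.2, hx.1, hx.2]
  set T : ℝ → ℝ := fun β => ∫ z in Set.Iio β, f z ∂μ with hT
  -- difference identities
  have hdisj : ∀ a b : ℝ, Disjoint (Set.Iio a) (Set.Ico a b) :=
    fun a b => Set.disjoint_left.mpr fun x hx hx' => absurd hx'.1 (not_le.mpr hx)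
  have hdiff : ∀ a b : ℝ, a ≤ b → T b - T a = ∫ z in Set.Ico a b, f z ∂μ := by
    intro a b hab
    have h := setIntegral_union (hdisj a b) measurableSet_Ico hfi.integrableOn hfi.integrableOn
    rw [Set.Iio_union_Ico_eq_Iio hab] at h
    rw [hT]; simp only []; rw [h]; ring
  have hmeasdiff : ∀ a b : ℝ, a ≤ b →
      (μ (Set.Ico a b)).toReal = (μ (Set.Iio b)).toReal - (μ (Set.Iio a)).toReal := by
    intro a b hab
    have h : μ (Set.Iio b) = μ (Set.Iio a) + μ (Set.Ico a b) := by
      rw [← measure_union (hdisj a b) measurableSet_Ico, Set.Iio_union_Ico_eq_Iio hab]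
    rw [h, ENNReal.toReal_add (measure_ne_top μ _) (measure_ne_top μ _)]; ring
  have Emid : ∀ a b : Fin m, (a : ℕ) + 1 = (b : ℕ) →
      |T (s b) - T (s a)| = (μ (Set.Iio (s b))).toReal - (μ (Set.Iio (s a))).toReal := by
    intro a b hab
    have hab' : s a < s b := hs_mono (by rw [Fin.lt_def]; omega)
    rw [hdiff _ _ hab'.le, ← setIntegral_congr_set Ioo_ae_eq_Ico,
      hconst_int _ _ measurableSet_Ioo (Cmid a b hab),
      measure_congr (Ioo_ae_eq_Ico (a := s a) (b := s b)), hmeasdiff _ _ hab'.le]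
  -- telescoping setup
  let s' : ℕ → Fin m := fun j => ⟨min j (m - 1), by omega⟩
  have hs'lt : ∀ (j : ℕ) (hj : j < m), s' j = ⟨j, hj⟩ := by
    intro j hj
    simp only [s', Fin.mk.injEq]
    omega
  set q : ℕ → ℝ := fun j => (μ (Set.Iio (s (s' j)))).toReal with hq
  set t : ℕ → ℝ := fun j => T (s (s' j)) with ht
  have htel : ∑ j ∈ Finset.range (m - 1), (q (j + 1) - q j) = q (m - 1) - q 0 :=
    Finset.sum_range_sub q (m - 1)
  have hstep : ∀ j ∈ Finset.range (m - 1), q (j + 1) - q j = |t (j + 1) - t j| := by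
    intro j hj
    rw [Finset.mem_range] at hj
    have h1 : s' j = ⟨j, by omega⟩ := hs'lt j (by omega)
    have h2 : s' (j + 1) = ⟨j + 1, by omega⟩ := hs'lt (j + 1) (by omega)
    show (μ (Set.Iio (s (s' (j+1))))).toReal - (μ (Set.Iio (s (s' j)))).toReal
      = |T (s (s' (j+1))) - T (s (s' j))|
    rw [h1, h2]
    exact (Emid ⟨j, by omega⟩ ⟨j + 1, by omega⟩ rfl).symm
  have hq0 : q 0 = |t 0| := by
    have h0 : s' 0 = j0 := by simp only [s', hj0, Fin.mk.injEq]; omega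
    show (μ (Set.Iio (s (s' 0)))).toReal = |T (s (s' 0))|
    rw [h0, ← hconst_int _ _ measurableSet_Iio Cio]
  have hqlast : 1 - q (m - 1) = |t (m - 1)| := by
    have h0 : s' (m - 1) = jmax := by simp only [s', hjmax, Fin.mk.injEq]; omega
    show 1 - (μ (Set.Iio (s (s' (m - 1))))).toReal = |T (s (s' (m - 1)))|
    rw [h0]
    have hcompl : μ (Set.Iio (s jmax)) + μ (Set.Ici (s jmax)) = 1 := by
      rw [← Set.compl_Iio]
      rw [measure_add_measure_compl measurableSet_Iio, measure_univ]
    have htr : (μ (Set.Iio (s jmax))).toReal + (μ (Set.Ici (s jmax))).toReal = 1 := by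
      rw [← ENNReal.toReal_add (measure_ne_top μ _) (measure_ne_top μ _), hcompl]; simp
    have hIci : ∫ z in Set.Ici (s jmax), f z ∂μ = - T (s jmax) := by
      have h := integral_add_compl (measurableSet_Iio (a := s jmax)) hfi
      rw [Set.compl_Iio, hzero] at h
      rw [hT]; simp only []; linarith
    have habsIci : |∫ z in Set.Ici (s jmax), f z ∂μ| = (μ (Set.Ici (s jmax))).toReal := by
      rw [← setIntegral_congr_set Ioi_ae_eq_Ici,
        hconst_int _ _ measurableSet_Ioi Coi,
        measure_congr (Ioi_ae_eq_Ici (a := s jmax))]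
    rw [hIci, abs_neg] at habsIci
    linarith
  -- sum bound
  have habs_sub : ∀ a b : ℝ, |a - b| ≤ |a| + |b| := fun a b => by
    calc |a - b| = |a + -b| := by ring_nf
    _ ≤ |a| + |-b| := abs_add_le a (-b)
    _ = |a| + |b| := by rw [abs_neg]
  have hsum_bound : (1 : ℝ) ≤ 2 * ∑ j ∈ Finset.range m, |t j| := by
    have h1 : q (m - 1) - q 0 ≤ ∑ j ∈ Finset.range (m - 1), (|t (j + 1)| + |t j|) := by
      rw [← htel]
      refine Finset.sum_le_sum fun j hj => ?_
      rw [hstep j hj]; exact habs_sub _ _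
    have h2 : ∑ j ∈ Finset.range (m - 1), (|t (j + 1)| + |t j|) =
        ∑ j ∈ Finset.range (m - 1), |t (j + 1)| + ∑ j ∈ Finset.range (m - 1), |t j| :=
      Finset.sum_add_distrib
    have hm' : m - 1 + 1 = m := by omega
    have h3 := Finset.sum_range_succ' (fun j => |t j|) (m - 1)
    rw [hm'] at h3
    have h4 := Finset.sum_range_succ (fun j => |t j|) (m - 1)
    rw [hm'] at h4
    have : (1 : ℝ) = q 0 + (q (m - 1) - q 0) + (1 - q (m - 1)) := by ring
    rw [this, hq0, hqlast]
    linarith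
  -- extract a good breakpoint
  have hkpos : (0 : ℝ) < k := by exact_mod_cast hk
  have hex : ∃ j ∈ Finset.range m, 1 / (2 * (k : ℝ)) ≤ |t j| := by
    by_contra h
    push_neg at h
    have hlt : ∑ j ∈ Finset.range m, |t j| < ∑ j ∈ Finset.range m, 1 / (2 * (k : ℝ)) := by
      refine Finset.sum_lt_sum_of_nonempty ?_ h
      rw [Finset.nonempty_range_iff]; omega
    rw [Finset.sum_const, Finset.card_range, nsmul_eq_mul] at hlt
    have hmk : (m : ℝ) ≤ k := by exact_mod_cast hcard
    have : (m : ℝ) * (1 / (2 * k)) ≤ (k : ℝ) * (1 / (2 * k)) := by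
      apply mul_le_mul_of_nonneg_right hmk; positivity
    have hhalf : (k : ℝ) * (1 / (2 * k)) = 1 / 2 := by field_simp
    linarith
  obtain ⟨j, hjm, hj⟩ := hex
  set β : ℝ := s (s' j) with hβ
  have hTβ : 1 / (2 * (k : ℝ)) ≤ |T β| := hj
  -- sign function facts
  have hsgn_meas : Measurable fun z : ℝ => sgn (z - β) := by
    have : (fun z : ℝ => sgn (z - β)) = fun z => if z ∈ Set.Ici β then (1:ℝ) else -1 := by
      funext z; simp [sgn, Set.mem_Ici, sub_nonneg]
    rw [this]
    exact Measurable.ite measurableSet_Ici measurable_const measurable_const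
  have hsgn_lt : ∀ z < β, sgn (z - β) = -1 := fun z hz => by
    rw [sgn, if_neg]; linarith
  have hsgn_ge : ∀ z, β ≤ z → sgn (z - β) = 1 := fun z hz => by
    rw [sgn, if_pos]; linarith
  have hGi : Integrable (fun z => f z * sgn (z - β)) μ := by
    refine Integrable.mono' (integrable_const 1) (hfm.mul hsgn_meas).aestronglyMeasurable ?_
    refine Filter.Eventually.of_forall fun z => ?_
    rw [Real.norm_eq_abs, abs_mul, habs, one_mul]
    rcases le_or_gt β z with h | h
    · rw [hsgn_ge z h]; norm_num
    · rw [hsgn_lt z h]; norm_num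
  have hIci : ∫ z in Set.Ici β, f z ∂μ = - T β := by
    have h := integral_add_compl (measurableSet_Iio (a := β)) hfi
    rw [Set.compl_Iio, hzero] at h
    rw [hT]; simp only []; linarith
  have hF : ∫ z, f z * sgn (z - β) ∂μ = -2 * T β := by
    have hsplit := integral_add_compl (measurableSet_Iio (a := β)) hGi
    rw [Set.compl_Iio] at hsplit
    have hlo : ∫ z in Set.Iio β, f z * sgn (z - β) ∂μ = - T β := by
      rw [setIntegral_congr_fun measurableSet_Iio
        (fun z hz => by show f z * sgn (z - β) = - f z; rw [hsgn_lt z hz]; ring :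
          Set.EqOn (fun z => f z * sgn (z - β)) (fun z => - f z) (Set.Iio β))]
      rw [integral_neg]
    have hhi : ∫ z in Set.Ici β, f z * sgn (z - β) ∂μ = - T β := by
      rw [setIntegral_congr_fun measurableSet_Ici
        (fun z hz => by show f z * sgn (z - β) = f z; rw [hsgn_ge z hz]; ring :
          Set.EqOn (fun z => f z * sgn (z - β)) f (Set.Ici β))]
      exact hIci
    rw [hlo, hhi] at hsplit
    linarith
  have habsF : 1 / (k : ℝ) ≤ |∫ z, f z * sgn (z - β) ∂μ| := by
    rw [hF, abs_mul, abs_neg]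
    have h2 : |(2 : ℝ)| = 2 := by norm_num
    rw [h2]
    have hfs : 2 * (1 / (2 * (k : ℝ))) = 1 / k := by field_simp
    linarith
  set F : ℝ := ∫ z, f z * sgn (z - β) ∂μ with hFdef
  refine ⟨β, if 0 ≤ F then 1 else -1, by split <;> simp, ?_⟩
  have hpull : ∫ z, f z * ((if 0 ≤ F then (1:ℝ) else -1) * sgn (z - β)) ∂μ
      = (if 0 ≤ F then (1:ℝ) else -1) * F := by
    rw [show (fun z => f z * ((if 0 ≤ F then (1:ℝ) else -1) * sgn (z - β)))
        = fun z => (if 0 ≤ F then (1:ℝ) else -1) * (f z * sgn (z - β)) from funext fun z => by ring]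
    rw [integral_const_mul]
  rw [hpull]
  have hbf : (if 0 ≤ F then (1:ℝ) else -1) * F = |F| := by
    split
    · rename_i h; rw [abs_of_nonneg h]; ring
    · rename_i h; rw [abs_of_neg (not_le.mp h)]; ring
  rw [hbf]
  have h2k : 1 / (2 * (k:ℝ)) ≤ 1 / (k:ℝ) := by
    apply one_div_le_one_div_of_le hkpos; linarith
  calc 1 / (2 * (k:ℝ)) ≤ 1 / (k:ℝ) := h2k
  _ ≤ |F| := habsF

lemma lintegral_pi_prod : ∀ (n : ℕ) (g : Fin n → ℝ → ℝ≥0∞), (∀ i, Measurable (g i)) →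
    ∀ (μ : Measure ℝ), SigmaFinite μ →
    ∫⁻ y, ∏ i, g i (y i) ∂(Measure.pi fun _ : Fin n => μ) = ∏ i, ∫⁻ x, g i x ∂μ := by
  intro n
  induction n with
  | zero =>
    intro g hg μ hμ
    simp only [Finset.univ_eq_empty, Finset.prod_empty]
    rw [lintegral_const, one_mul, Measure.pi_univ]
    simp
  | succ n ih =>
    intro g hg μ hμ
    haveI := hμ
    have hmp := measurePreserving_piFinSuccAbove (fun _ : Fin (n + 1) => μ) 0
    set e := MeasurableEquiv.piFinSuccAbove (fun _ : Fin (n + 1) => ℝ) 0 with he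
    have hG : Measurable fun p : ℝ × (Fin n → ℝ) => g 0 p.1 * ∏ j : Fin n, g j.succ (p.2 j) := by
      refine ((hg 0).comp measurable_fst).mul ?_
      exact (Finset.measurable_prod Finset.univ fun (j : Fin n) _ =>
        (hg j.succ).comp (measurable_pi_apply j)).comp measurable_snd
    have key : ∫⁻ y, ∏ i, g i (y i) ∂(Measure.pi fun _ : Fin (n + 1) => μ)
        = ∫⁻ p, g 0 p.1 * ∏ j : Fin n, g j.succ (p.2 j)
            ∂((μ : Measure ℝ).prod (Measure.pi fun _ : Fin n => μ)) := by
      rw [← hmp.lintegral_comp hG]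
      refine lintegral_congr fun y => ?_
      have h1 : (e y).1 = y 0 := rfl
      have h2 : ∀ j : Fin n, (e y).2 j = y (Fin.succAbove 0 j) := fun j => rfl
      simp only [h1, h2, Fin.succAbove_zero]
      rw [Fin.prod_univ_succ]
    have h2m : AEMeasurable (fun y : Fin n → ℝ => ∏ j : Fin n, g j.succ (y j))
        (Measure.pi fun _ : Fin n => μ) :=
      (Finset.measurable_prod Finset.univ fun (j : Fin n) _ =>
        (hg j.succ).comp (measurable_pi_apply j)).aemeasurable
    calc ∫⁻ y, ∏ i, g i (y i) ∂(Measure.pi fun _ : Fin (n + 1) => μ)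
        = (∫⁻ x, g 0 x ∂μ) *
          ∫⁻ y, ∏ j : Fin n, g j.succ (y j) ∂(Measure.pi fun _ : Fin n => μ) := by
          rw [key]; exact lintegral_prod_mul (hg 0).aemeasurable h2m
      _ = ∏ i, ∫⁻ x, g i x ∂μ := by
          rw [ih (fun j => g j.succ) (fun j => hg j.succ) μ hμ, Fin.prod_univ_succ]

lemma map_withDensity_equiv {α β : Type*} [MeasurableSpace α] [MeasurableSpace β]
    (μ : Measure α) (e : α ≃ᵐ β) (ρ : β → ℝ≥0∞) (hρ : Measurable ρ) :
    (μ.map e).withDensity ρ = (μ.withDensity (ρ ∘ e)).map e := by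
  ext A hA
  rw [withDensity_apply _ hA, Measure.map_apply e.measurable hA,
    withDensity_apply _ (e.measurable hA), setLIntegral_map hA hρ e.measurable]
  rfl

lemma pi_gauss (d : ℕ) :
    Measure.pi (fun _ : Fin d => gaussianReal 0 1)
      = (volume : Measure (Fin d → ℝ)).withDensity
          (fun y => ∏ i, gaussianPDF 0 1 (y i)) := by
  refine Measure.pi_eq (μ := fun _ : Fin d => gaussianReal 0 1) fun s hs => ?_
  have hbox : MeasurableSet (Set.pi Set.univ s) := MeasurableSet.univ_pi hs
  rw [withDensity_apply _ hbox]
  have hind : ∀ y : Fin d → ℝ, (Set.pi Set.univ s).indicator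
      (fun y => ∏ i, gaussianPDF 0 1 (y i)) y
      = ∏ i, (s i).indicator (gaussianPDF 0 1) (y i) := by
    intro y
    by_cases hy : y ∈ Set.pi Set.univ s
    · rw [Set.indicator_of_mem hy]
      exact Finset.prod_congr rfl fun i _ =>
        (Set.indicator_of_mem (hy i (Set.mem_univ i)) _).symm
    · rw [Set.indicator_of_notMem hy]
      rw [Set.mem_univ_pi] at hy
      push_neg at hy
      obtain ⟨i, hi⟩ := hy
      exact (Finset.prod_eq_zero (Finset.mem_univ i)
        (by rw [Set.indicator_of_notMem hi])).symm
  rw [← lintegral_indicator hbox]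
  calc ∫⁻ y : Fin d → ℝ, (Set.pi Set.univ s).indicator (fun y => ∏ i, gaussianPDF 0 1 (y i)) y ∂volume
      = ∫⁻ y : Fin d → ℝ, ∏ i, (s i).indicator (gaussianPDF 0 1) (y i) ∂volume := by
        exact lintegral_congr hind
    _ = ∫⁻ y : Fin d → ℝ, ∏ i, (s i).indicator (gaussianPDF 0 1) (y i)
          ∂(Measure.pi fun _ : Fin d => (volume : Measure ℝ)) := by rw [volume_pi]
    _ = ∏ i, ∫⁻ x, (s i).indicator (gaussianPDF 0 1) x ∂volume :=
        lintegral_pi_prod d (fun i => (s i).indicator (gaussianPDF 0 1))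
          (fun i => (measurable_gaussianPDF 0 1).indicator (hs i))
          volume (by infer_instance)
    _ = ∏ i, gaussianReal 0 1 (s i) := by
        refine Finset.prod_congr rfl fun i _ => ?_
        rw [lintegral_indicator (hs i), gaussianReal_apply 0 one_ne_zero (s i)]

lemma std_density_eq (d : ℕ) (y : Fin d → ℝ) :
    ENNReal.ofReal (Real.exp (-‖((MeasurableEquiv.toLp 2 (Fin d → ℝ)).symm).symm y‖ ^ 2 / 2)
        / (2 * π) ^ ((d : ℝ) / 2))
      = ∏ i, gaussianPDF 0 1 (y i) := by
  have hnorm : ‖((MeasurableEquiv.toLp 2 (Fin d → ℝ)).symm).symm y‖ ^ 2 = ∑ i, (y i) ^ 2 := by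
    show ‖WithLp.toLp 2 y‖ ^ 2 = _
    rw [EuclideanSpace.norm_eq]
    rw [Real.sq_sqrt (by positivity)]
    refine Finset.sum_congr rfl fun i _ => ?_
    rw [Real.norm_eq_abs, sq_abs]
  have hpow : (2 * π) ^ ((d : ℝ) / 2) = (√(2 * π)) ^ (d : ℕ) := by
    rw [Real.sqrt_eq_rpow, ← Real.rpow_natCast ((2 * π) ^ ((1:ℝ)/2)) d,
      ← Real.rpow_mul (by positivity)]
    congr 1
    ring
  have hprod : Real.exp (-(∑ i, (y i) ^ 2) / 2) / (2 * π) ^ ((d : ℝ) / 2)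
      = ∏ i, gaussianPDFReal 0 1 (y i) := by
    have : ∀ i : Fin d, gaussianPDFReal 0 1 (y i)
        = (√(2 * π))⁻¹ * Real.exp (-(y i) ^ 2 / 2) := by
      intro i
      rw [gaussianPDFReal]
      norm_num
    rw [Finset.prod_congr rfl fun i _ => this i, Finset.prod_mul_distrib,
      Finset.prod_const, ← Real.exp_sum, hpow]
    rw [Finset.card_univ, Fintype.card_fin]
    rw [div_eq_mul_inv, mul_comm]
    congr 1
    · rw [inv_pow]
    · congr 1
      rw [← Finset.sum_div, ← Finset.sum_neg_distrib]
  rw [hnorm, hprod]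
  simp only [gaussianPDF]
  exact ENNReal.ofReal_prod_of_nonneg (fun i _ => gaussianPDFReal_nonneg 0 1 (y i))

lemma std_eq (d : ℕ) :
    stdGaussianPi d = (Measure.pi fun _ : Fin d => gaussianReal 0 1).map
      ((MeasurableEquiv.toLp 2 (Fin d → ℝ)).symm).symm := by
  set e := (MeasurableEquiv.toLp 2 (Fin d → ℝ)).symm with he
  have hρ : Measurable fun x : EuclideanSpace ℝ (Fin d) =>
      ENNReal.ofReal (Real.exp (-‖x‖ ^ 2 / 2) / (2 * π) ^ ((d : ℝ) / 2)) := by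
    refine Measurable.ennreal_ofReal ?_
    exact (Continuous.div_const (by continuity) _).measurable
  have hvol : (volume : Measure (EuclideanSpace ℝ (Fin d)))
      = (volume : Measure (Fin d → ℝ)).map e.symm :=
    (((EuclideanSpace.volume_preserving_symm_measurableEquiv_toLp (Fin d))).symm e).map_eq.symm
  rw [stdGaussianPi, hvol, map_withDensity_equiv _ e.symm _ hρ,
    show ((fun x : EuclideanSpace ℝ (Fin d) =>
        ENNReal.ofReal (Real.exp (-‖x‖ ^ 2 / 2) / (2 * π) ^ ((d : ℝ) / 2))) ∘ ⇑e.symm)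
      = fun y => ∏ i, gaussianPDF 0 1 (y i) from funext fun y => std_density_eq d y,
    ← pi_gauss]

lemma pi_map_eval (d : ℕ) (i0 : Fin d) :
    (Measure.pi fun _ : Fin d => gaussianReal 0 1).map (Function.eval i0)
      = gaussianReal 0 1 := by
  ext A hA
  rw [Measure.map_apply (measurable_pi_apply i0) hA]
  rw [show Function.eval i0 ⁻¹' A = Set.pi Set.univ
      (Function.update (fun _ : Fin d => (Set.univ : Set ℝ)) i0 A) from Set.eval_preimage]
  rw [Measure.pi_pi]
  rw [Finset.prod_eq_single i0 (fun b _ hb => by rw [Function.update_of_ne hb]; simp)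
    (fun h => absurd (Finset.mem_univ i0) h)]
  rw [Function.update_self]

lemma std_map_rot (d : ℕ)
    (R : EuclideanSpace ℝ (Fin d) ≃ₗᵢ[ℝ] EuclideanSpace ℝ (Fin d)) :
    (stdGaussianPi d).map R = stdGaussianPi d := by
  set Rm : EuclideanSpace ℝ (Fin d) ≃ᵐ EuclideanSpace ℝ (Fin d) :=
    R.toHomeomorph.toMeasurableEquiv with hRm
  have hcoe : ⇑Rm = ⇑R := rfl
  have hρ : Measurable fun x : EuclideanSpace ℝ (Fin d) =>
      ENNReal.ofReal (Real.exp (-‖x‖ ^ 2 / 2) / (2 * π) ^ ((d : ℝ) / 2)) := by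
    refine Measurable.ennreal_ofReal ?_
    exact (Continuous.div_const (by continuity) _).measurable
  have hmapvol : (volume : Measure (EuclideanSpace ℝ (Fin d))).map Rm = volume := by
    rw [hcoe]; exact R.measurePreserving.map_eq
  have h := map_withDensity_equiv (volume : Measure (EuclideanSpace ℝ (Fin d))) Rm _ hρ
  rw [hmapvol] at h
  have hρR : (fun x : EuclideanSpace ℝ (Fin d) =>
      ENNReal.ofReal (Real.exp (-‖x‖ ^ 2 / 2) / (2 * π) ^ ((d : ℝ) / 2))) ∘ Rm
      = fun x => ENNReal.ofReal (Real.exp (-‖x‖ ^ 2 / 2) / (2 * π) ^ ((d : ℝ) / 2)) := by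
    funext x
    simp only [Function.comp_apply, hcoe, R.norm_map]
  rw [hρR] at h
  rw [stdGaussianPi, ← hcoe]
  exact h.symm

lemma std_map_inner (d : ℕ) (hd : 1 ≤ d) (v : EuclideanSpace ℝ (Fin d)) (hv : ‖v‖ = 1) :
    (stdGaussianPi d).map (fun x => ⟪v, x⟫) = gaussianReal 0 1 := by
  set i0 : Fin d := ⟨0, hd⟩
  set e0 : EuclideanSpace ℝ (Fin d) := EuclideanSpace.single i0 1 with he0
  have he0n : ‖e0‖ = 1 := by simp [he0, EuclideanSpace.norm_single]
  set R : EuclideanSpace ℝ (Fin d) ≃ₗᵢ[ℝ] EuclideanSpace ℝ (Fin d) :=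
    Submodule.reflection (ℝ ∙ (v - e0))ᗮ with hR
  have hRv : R v = e0 := Submodule.reflection_sub (by rw [hv, he0n])
  have hinner : ∀ x, ⟪v, x⟫ = R x i0 := by
    intro x
    have h1 : ⟪v, x⟫ = ⟪R v, R x⟫ := (R.inner_map_map v x).symm
    rw [h1, hRv, he0, EuclideanSpace.inner_single_left]
    simp
  set e := (MeasurableEquiv.toLp 2 (Fin d → ℝ)).symm with he
  have hfun : (fun x : EuclideanSpace ℝ (Fin d) => ⟪v, x⟫)
      = (Function.eval i0) ∘ (⇑e ∘ ⇑R) := funext fun x => hinner x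
  rw [hfun, ← Measure.map_map (measurable_pi_apply i0)
      (e.measurable.comp R.continuous.measurable),
    ← Measure.map_map e.measurable R.continuous.measurable, std_map_rot d R, std_eq d,
    Measure.map_map e.measurable e.symm.measurable]
  have hid : ⇑e ∘ ⇑e.symm = id := funext fun y => e.apply_symm_apply y
  rw [hid, Measure.map_id, pi_map_eval]

/-- If `f : ℝ → {-1, 1}` is `(k+1)`-piecewise constant with vanishing Gaussian moments of
degree `< k`, then for any unit vector `v ∈ ℝ^d` there is a halfspace
`σ(x) = b · sign(⟪v, x⟫ - β)` with `E_{x ∼ N(0, I_d)}[f(⟪v, x⟫) σ(x)] ≥ 1/(2k)`. -/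
theorem stmt4 (k d : ℕ) (hk : 1 ≤ k) (hd : 1 ≤ d)
    (f : ℝ → ℝ) (hf_val : ∀ z, f z = 1 ∨ f z = -1)
    (hf_pc : PiecewiseConst (k + 1) f)
    (hmom : ∀ t : ℕ, t < k → ∫ z, f z * z ^ t ∂(gaussianReal 0 1) = 0)
    (v : EuclideanSpace ℝ (Fin d)) (hv : ‖v‖ = 1) :
    ∃ β b : ℝ, (b = 1 ∨ b = -1) ∧
      1 / (2 * (k : ℝ)) ≤ ∫ x, f ⟪v, x⟫ * (b * sgn (⟪v, x⟫ - β)) ∂(stdGaussianPi d) := by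
  obtain ⟨n, hn, z, hz⟩ := hf_pc
  have hn' : n ≤ k := by simpa using hn
  set S : Finset ℝ := Finset.image z Finset.univ with hS
  have hcard : S.card ≤ k := le_trans (Finset.card_image_le.trans (by simp)) hn'
  have hP : ∀ x y : ℝ, x ≤ y → (∀ t ∈ S, t ∉ Set.Icc x y) → f x = f y := by
    intro x y hxy ht
    exact hz x y hxy fun i => ht (z i) (Finset.mem_image_of_mem z (Finset.mem_univ i))
  have hzero : ∫ zz, f zz ∂(gaussianReal 0 1) = 0 := by
    have h := hmom 0 hk
    simpa using h
  obtain ⟨β, b, hb, hle⟩ := core k hk f hf_val S hcard hP hzero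
  refine ⟨β, b, hb, ?_⟩
  have hfm : Measurable f := measurable_pc f hf_val S hP
  have hsgn_meas : Measurable fun z : ℝ => sgn (z - β) := by
    have h : (fun z : ℝ => sgn (z - β)) = fun z => if z ∈ Set.Ici β then (1:ℝ) else -1 := by
      funext zz; simp [sgn, Set.mem_Ici, sub_nonneg]
    rw [h]; exact Measurable.ite measurableSet_Ici measurable_const measurable_const
  have hG : Measurable fun z : ℝ => f z * (b * sgn (z - β)) :=
    hfm.mul (measurable_const.mul hsgn_meas)
  have hL : Measurable fun x : EuclideanSpace ℝ (Fin d) => ⟪v, x⟫ :=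
    (Continuous.inner continuous_const continuous_id).measurable
  have hmap := std_map_inner d hd v hv
  have hkey := integral_map (μ := stdGaussianPi d) (φ := fun x => ⟪v, x⟫) hL.aemeasurable
      (f := fun z => f z * (b * sgn (z - β))) (by rw [hmap]; exact hG.aestronglyMeasurable)
  rw [hmap] at hkey
  rw [hkey] at hle
  exact hle
end

section
/- There exist absolute constants c > 0 and C > 0 such that for every positive integer k there exists a measurable function f : ℝ → [−1, 1] with E_{z∼N(0,1)}[f(z)·z^t] = 0 for every integer 0 ≤ t ≤ k, and E_{z∼N(0,1)}[f(z)·ReLU(z)] ≥ c·k^{−C}. -/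
open MeasureTheory ProbabilityTheory Real intervalIntegral
open scoped ENNReal NNReal

lemma intc (c : ℝ) (hc : c ≠ 0) (b : ℝ) : ∫ θ in (0:ℝ)..b, Real.cos (c*θ) = Real.sin (c*b)/c := by
  rw [intervalIntegral.integral_comp_mul_left Real.cos hc]
  simp [integral_cos, div_eq_inv_mul]

lemma sinmul (x y : ℝ) : Real.sin x * Real.sin y = (Real.cos (x - y) - Real.cos (x + y))/2 := by
  rw [Real.cos_sub, Real.cos_add]; ring

lemma sincos (a θ : ℝ) : Real.sin (a*θ) * Real.cos θ
    = (Real.sin ((a+1)*θ) + Real.sin ((a-1)*θ))/2 := by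
  rw [add_mul, sub_mul, one_mul, Real.sin_add, Real.sin_sub]; ring

noncomputable def J (a t : ℕ) : ℝ := ∫ θ in (0:ℝ)..π, Real.sin (a*θ) * (Real.cos θ ^ t * Real.sin θ)

lemma Jbase (a : ℕ) (ha : 2 ≤ a) : J a 0 = 0 := by
  have h1 : ((a:ℝ) - 1) ≠ 0 := by
    have : (2:ℝ) ≤ a := by exact_mod_cast ha
    nlinarith
  have h2 : ((a:ℝ) + 1) ≠ 0 := by positivity
  have : J a 0 = ∫ θ in (0:ℝ)..π,
      ((Real.cos (((a:ℝ)-1)*θ) - Real.cos (((a:ℝ)+1)*θ))/2) := by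
    unfold J
    apply intervalIntegral.integral_congr
    intro θ _
    simp only [pow_zero, one_mul]
    rw [sinmul]
    ring_nf
  rw [this, intervalIntegral.integral_div, intervalIntegral.integral_sub, intc _ h1, intc _ h2]
  · have e1 : ((a:ℝ)-1)*π = ((((a:ℤ)-1) : ℤ):ℝ) * π := by push_cast; ring
    have e2 : ((a:ℝ)+1)*π = ((((a:ℤ)+1) : ℤ):ℝ) * π := by push_cast; ring
    rw [e1, e2, Real.sin_int_mul_pi, Real.sin_int_mul_pi]
    simp
  · exact (Real.continuous_cos.comp (continuous_const.mul continuous_id)).intervalIntegrable _ _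
  · exact (Real.continuous_cos.comp (continuous_const.mul continuous_id)).intervalIntegrable _ _

lemma Jstep (a t : ℕ) (ha : 2 ≤ a) :
    J a (t+1) = (J (a+1) t + J (a-1) t)/2 := by
  have hcast : ((a - 1 : ℕ) : ℝ) = (a:ℝ) - 1 := by
    have : 1 ≤ a := le_trans one_le_two ha
    push_cast [this]; ring
  have key : ∀ θ : ℝ, Real.sin (a*θ) * (Real.cos θ ^ (t+1) * Real.sin θ)
      = (Real.sin (((a+1:ℕ):ℝ)*θ) * (Real.cos θ ^ t * Real.sin θ)
        + Real.sin (((a-1:ℕ):ℝ)*θ) * (Real.cos θ ^ t * Real.sin θ))/2 := by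
    intro θ
    rw [hcast]
    push_cast
    have := sincos (a:ℝ) θ
    calc Real.sin (a*θ) * (Real.cos θ ^ (t+1) * Real.sin θ)
        = (Real.sin (a*θ) * Real.cos θ) * (Real.cos θ ^ t * Real.sin θ) := by ring
      _ = _ := by rw [this]; ring
  unfold J
  rw [intervalIntegral.integral_congr (g := fun θ => (Real.sin (((a+1:ℕ):ℝ)*θ) * (Real.cos θ ^ t * Real.sin θ) + Real.sin (((a-1:ℕ):ℝ)*θ) * (Real.cos θ ^ t * Real.sin θ))/2) (fun θ _ => key θ)]
  rw [intervalIntegral.integral_div, intervalIntegral.integral_add]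
  · exact (((Real.continuous_sin.comp (continuous_const.mul continuous_id)).mul ((Real.continuous_cos.pow t).mul Real.continuous_sin))).intervalIntegrable _ _
  · exact (((Real.continuous_sin.comp (continuous_const.mul continuous_id)).mul ((Real.continuous_cos.pow t).mul Real.continuous_sin))).intervalIntegrable _ _

lemma Jzero : ∀ t a : ℕ, t + 1 < a → J a t = 0 := by
  intro t
  induction t with
  | zero => intro a ha; exact Jbase a ha
  | succ t ih =>
    intro a ha
    have h2 : 2 ≤ a := by omega
    rw [Jstep a t h2, ih (a+1) (by omega), ih (a-1) (by omega)]
    norm_num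

lemma sin_quarter (n : ℕ) (hn : n % 4 = 1) : Real.sin ((n:ℝ) * (π/2)) = 1 := by
  obtain ⟨q, hq⟩ : ∃ q, n = 4*q + 1 := ⟨n/4, by omega⟩
  subst hq
  have : ((4*q+1 : ℕ):ℝ) * (π/2) = π/2 + (q:ℕ) * (2*π) := by push_cast; ring
  rw [this, Real.sin_add_nat_mul_two_pi, Real.sin_pi_div_two]

lemma relu_pointwise (a θ : ℝ) : Real.sin (a*θ) * (Real.cos θ * Real.sin θ)
    = (Real.cos ((a-2)*θ) - Real.cos ((a+2)*θ))/4 := by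
  rw [show (a-2)*θ = a*θ - 2*θ by ring, show (a+2)*θ = a*θ + 2*θ by ring,
    Real.cos_sub, Real.cos_add, Real.sin_two_mul, Real.cos_two_mul]
  ring

lemma Krelu (N : ℕ) (hN : N % 4 = 3) :
    ∫ θ in (0:ℝ)..(π/2), Real.sin ((N:ℝ)*θ) * (Real.cos θ * Real.sin θ)
      = (1/((N:ℝ)-2) - 1/((N:ℝ)+2))/4 := by
  have h3 : 3 ≤ N := by omega
  have hm : ((N:ℝ) - 2) ≠ 0 := by
    have : (3:ℝ) ≤ N := by exact_mod_cast h3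
    nlinarith
  have hp : ((N:ℝ) + 2) ≠ 0 := by positivity
  rw [intervalIntegral.integral_congr (g := fun θ => (Real.cos (((N:ℝ)-2)*θ) - Real.cos (((N:ℝ)+2)*θ))/4) (fun θ _ => relu_pointwise N θ)]
  rw [intervalIntegral.integral_div, intervalIntegral.integral_sub, intc _ hm, intc _ hp]
  · have e1 : ((N:ℝ)-2)*(π/2) = ((N-2 : ℕ):ℝ) * (π/2) := by push_cast [show 2 ≤ N by omega]; ring
    have e2 : ((N:ℝ)+2)*(π/2) = ((N+2 : ℕ):ℝ) * (π/2) := by push_cast; ring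
    rw [e1, e2, sin_quarter _ (by omega), sin_quarter _ (by omega)]
  · exact (Real.continuous_cos.comp (continuous_const.mul continuous_id)).intervalIntegrable _ _
  · exact (Real.continuous_cos.comp (continuous_const.mul continuous_id)).intervalIntegrable _ _

lemma subst_cos (h : ℝ → ℝ) (hh : Continuous h) (α β : ℝ) :
    ∫ z in Real.cos β..Real.cos α, h z = ∫ θ in α..β, Real.sin θ * h (Real.cos θ) := by
  have key := intervalIntegral.integral_comp_smul_deriv (f := Real.cos)
    (f' := fun θ => -Real.sin θ) (a := α) (b := β)
    (fun x _ => Real.hasDerivAt_cos x) (Real.continuous_sin.neg.continuousOn) hh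
  have e : ∫ x in α..β, (fun θ => -Real.sin θ) x • (h ∘ Real.cos) x
      = -∫ θ in α..β, Real.sin θ * h (Real.cos θ) := by
    rw [← intervalIntegral.integral_neg]
    congr 1; funext θ; simp [mul_comm]
  rw [e] at key
  rw [intervalIntegral.integral_symm]
  linarith [key]

lemma gauss_int (N : ℕ) (g : ℝ → ℝ) (hg : Continuous g) :
    ∫ z, (Set.Icc (-1:ℝ) 1).indicator
        (fun z => Real.exp ((z^2-1)/2) * Real.sin ((N:ℝ) * Real.arccos z)) z * g z
        ∂(gaussianReal 0 1)
    = (Real.exp (-(1:ℝ)/2) / Real.sqrt (2*π)) *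
        ∫ z in (-1:ℝ)..1, Real.sin ((N:ℝ) * Real.arccos z) * g z := by
  rw [gaussianReal_of_var_ne_zero 0 one_ne_zero]
  have hpdf : volume.withDensity (gaussianPDF 0 1)
      = volume.withDensity (fun x => ((gaussianPDFReal 0 1 x).toNNReal : ℝ≥0∞)) := rfl
  rw [hpdf, integral_withDensity_eq_integral_smul
    (show Measurable (fun x => (gaussianPDFReal 0 1 x).toNNReal) from
      measurable_real_toNNReal.comp (measurable_gaussianPDFReal 0 1))]
  have key : (fun x => (gaussianPDFReal 0 1 x).toNNReal •
      ((Set.Icc (-1:ℝ) 1).indicator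
        (fun z => Real.exp ((z^2-1)/2) * Real.sin ((N:ℝ) * Real.arccos z)) x * g x))
      = (Set.Icc (-1:ℝ) 1).indicator
        (fun z => gaussianPDFReal 0 1 z *
          (Real.exp ((z^2-1)/2) * Real.sin ((N:ℝ) * Real.arccos z) * g z)) := by
    funext x
    rw [NNReal.smul_def, Real.coe_toNNReal _ (gaussianPDFReal_nonneg 0 1 x)]
    by_cases hx : x ∈ Set.Icc (-1:ℝ) 1
    · rw [Set.indicator_of_mem hx, Set.indicator_of_mem hx, smul_eq_mul]
    · rw [Set.indicator_of_notMem hx, Set.indicator_of_notMem hx]; simp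
  rw [key, MeasureTheory.integral_indicator measurableSet_Icc, integral_Icc_eq_integral_Ioc,
    ← intervalIntegral.integral_of_le (by norm_num : (-1:ℝ) ≤ 1),
    ← intervalIntegral.integral_const_mul]
  apply intervalIntegral.integral_congr
  intro z _
  dsimp only
  have hpdfz : gaussianPDFReal 0 1 z = (Real.sqrt (2*π))⁻¹ * Real.exp (-(z^2)/2) := by
    simp [gaussianPDFReal]
  rw [hpdfz]
  have : Real.exp (-(z^2)/2) * Real.exp ((z^2-1)/2) = Real.exp (-(1:ℝ)/2) := by
    rw [← Real.exp_add]; ring_nf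
  calc (Real.sqrt (2*π))⁻¹ * Real.exp (-(z^2)/2) *
        (Real.exp ((z^2-1)/2) * Real.sin ((N:ℝ) * Real.arccos z) * g z)
      = (Real.exp (-(z^2)/2) * Real.exp ((z^2-1)/2)) * (Real.sqrt (2*π))⁻¹ *
        (Real.sin ((N:ℝ) * Real.arccos z) * g z) := by ring
    _ = _ := by rw [this]; ring

/-- There are absolute constants `c, C > 0` such that for every `k ≥ 1` there exists a
measurable `f : ℝ → [-1, 1]` whose Gaussian moments of degree `≤ k` all vanish and with
`E_{z ∼ N(0,1)}[f(z) · ReLU(z)] ≥ c k^(-C)`. -/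
theorem stmt8 :
    ∃ c C : ℝ, 0 < c ∧ 0 < C ∧ ∀ k : ℕ, 0 < k →
      ∃ f : ℝ → ℝ, Measurable f ∧ (∀ z, f z ∈ Set.Icc (-1 : ℝ) 1) ∧
        (∀ t : ℕ, t ≤ k → ∫ z, f z * z ^ t ∂(gaussianReal 0 1) = 0) ∧
        c * (k : ℝ) ^ (-C) ≤ ∫ z, f z * max z 0 ∂(gaussianReal 0 1) := by
  have hsq : (0:ℝ) < Real.sqrt (2*π) := Real.sqrt_pos.mpr (by positivity)
  refine ⟨Real.exp (-(1:ℝ)/2) / Real.sqrt (2*π) / 64, 2, by positivity, two_pos, ?_⟩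
  intro k hk
  set N : ℕ := 4*(k/4) + 7 with hNdef
  have hN4 : N % 4 = 3 := by omega
  refine ⟨(Set.Icc (-1:ℝ) 1).indicator
      (fun z => Real.exp ((z^2-1)/2) * Real.sin ((N:ℝ) * Real.arccos z)), ?_, ?_, ?_, ?_⟩
  · exact (((Real.continuous_exp.comp (by continuity)).mul
      (Real.continuous_sin.comp (continuous_const.mul Real.continuous_arccos))).measurable).indicator
      measurableSet_Icc
  · intro z
    by_cases hz : z ∈ Set.Icc (-1:ℝ) 1
    · rw [Set.indicator_of_mem hz]
      have he : Real.exp ((z^2-1)/2) ≤ 1 := by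
        rw [Real.exp_le_one_iff]
        nlinarith [hz.1, hz.2]
      have habs : |Real.exp ((z^2-1)/2) * Real.sin ((N:ℝ) * Real.arccos z)| ≤ 1 := by
        rw [abs_mul]
        calc |Real.exp ((z^2-1)/2)| * |Real.sin ((N:ℝ) * Real.arccos z)| ≤ 1 * 1 := by
              apply mul_le_mul _ (Real.abs_sin_le_one _) (abs_nonneg _) zero_le_one
              rwa [abs_of_pos (Real.exp_pos _)]
          _ = 1 := mul_one 1
      exact Set.mem_Icc.mpr (abs_le.mp habs)
    · rw [Set.indicator_of_notMem hz]
      exact Set.mem_Icc.mpr ⟨by norm_num, by norm_num⟩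
  · intro t ht
    rw [gauss_int N (fun z => z^t) (continuous_pow t)]
    have heq : ∫ z in (-1:ℝ)..1, Real.sin ((N:ℝ)*Real.arccos z) * z^t = J N t := by
      calc ∫ z in (-1:ℝ)..1, Real.sin ((N:ℝ)*Real.arccos z) * z^t
          = ∫ z in Real.cos π..Real.cos 0,
              (fun z => Real.sin ((N:ℝ)*Real.arccos z) * z^t) z := by
            rw [Real.cos_pi, Real.cos_zero]
        _ = ∫ θ in (0:ℝ)..π, Real.sin θ *
              (Real.sin ((N:ℝ)*Real.arccos (Real.cos θ)) * Real.cos θ ^ t) :=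
            subst_cos _ ((Real.continuous_sin.comp
              (continuous_const.mul Real.continuous_arccos)).mul (continuous_pow t)) 0 π
        _ = J N t := by
            apply intervalIntegral.integral_congr
            intro θ hθ
            dsimp only [J]
            rw [Set.uIcc_of_le Real.pi_pos.le] at hθ
            rw [Real.arccos_cos hθ.1 hθ.2]
            ring
    rw [heq, Jzero t N (by omega)]
    simp
  · rw [gauss_int N (fun z => max z 0) (continuous_id.max continuous_const)]
    have hi1 : IntervalIntegrable (fun z => Real.sin ((N:ℝ)*Real.arccos z) * max z 0)
        volume (-1) 0 := Continuous.intervalIntegrable ((Real.continuous_sin.comp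
          (continuous_const.mul Real.continuous_arccos)).mul
          (continuous_id.max continuous_const)) _ _
    have hi2 : IntervalIntegrable (fun z => Real.sin ((N:ℝ)*Real.arccos z) * max z 0)
        volume 0 1 := Continuous.intervalIntegrable ((Real.continuous_sin.comp
          (continuous_const.mul Real.continuous_arccos)).mul
          (continuous_id.max continuous_const)) _ _
    have split : ∫ z in (-1:ℝ)..1, Real.sin ((N:ℝ)*Real.arccos z) * max z 0
        = ∫ z in (0:ℝ)..1, Real.sin ((N:ℝ)*Real.arccos z) * z := by
      rw [← intervalIntegral.integral_add_adjacent_intervals hi1 hi2]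
      have h1 : ∫ z in (-1:ℝ)..0, Real.sin ((N:ℝ)*Real.arccos z) * max z 0 = 0 := by
        rw [intervalIntegral.integral_congr (g := fun _ => (0:ℝ)) (fun z hz => by
          rw [Set.uIcc_of_le (by norm_num : (-1:ℝ) ≤ 0)] at hz
          rw [max_eq_right hz.2, mul_zero])]
        simp
      have h2 : ∫ z in (0:ℝ)..1, Real.sin ((N:ℝ)*Real.arccos z) * max z 0
          = ∫ z in (0:ℝ)..1, Real.sin ((N:ℝ)*Real.arccos z) * z := by
        apply intervalIntegral.integral_congr
        intro z hz
        rw [Set.uIcc_of_le (by norm_num : (0:ℝ) ≤ 1)] at hz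
        dsimp only
        rw [max_eq_left hz.1]
      rw [h1, h2, zero_add]
    rw [split]
    have heq : ∫ z in (0:ℝ)..1, Real.sin ((N:ℝ)*Real.arccos z) * z
        = ∫ θ in (0:ℝ)..(π/2), Real.sin ((N:ℝ)*θ) * (Real.cos θ * Real.sin θ) := by
      calc ∫ z in (0:ℝ)..1, Real.sin ((N:ℝ)*Real.arccos z) * z
          = ∫ z in Real.cos (π/2)..Real.cos 0,
              (fun z => Real.sin ((N:ℝ)*Real.arccos z) * z) z := by
            rw [Real.cos_pi_div_two, Real.cos_zero]
        _ = ∫ θ in (0:ℝ)..(π/2), Real.sin θ *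
              (Real.sin ((N:ℝ)*Real.arccos (Real.cos θ)) * Real.cos θ) :=
            subst_cos _ ((Real.continuous_sin.comp
              (continuous_const.mul Real.continuous_arccos)).mul continuous_id) 0 (π/2)
        _ = _ := by
            apply intervalIntegral.integral_congr
            intro θ hθ
            dsimp only
            rw [Set.uIcc_of_le (by positivity)] at hθ
            rw [Real.arccos_cos hθ.1 (le_trans hθ.2 (by linarith [Real.pi_pos]))]
            ring
    rw [heq, Krelu N hN4]
    -- final numeric inequality
    have hk1 : (1:ℝ) ≤ (k:ℝ) := by exact_mod_cast hk
    have hN7 : (7:ℝ) ≤ (N:ℝ) := by exact_mod_cast (by omega : 7 ≤ N)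
    have hNk : (N:ℝ) ≤ 8*(k:ℝ) := by
      have : N ≤ k + 7 := by omega
      have h8 : (N:ℝ) ≤ (k:ℝ) + 7 := by exact_mod_cast this
      linarith
    have hrpow : ((k:ℝ)) ^ (-(2:ℝ)) = ((k:ℝ)^(2:ℕ))⁻¹ := by
      rw [← Real.rpow_natCast (k:ℝ) 2, ← Real.rpow_neg (by positivity)]
      norm_num
    rw [hrpow]
    have e2 : (1/((N:ℝ)-2) - 1/((N:ℝ)+2))/4 = 1/(((N:ℝ)-2)*((N:ℝ)+2)) := by
      have h1 : ((N:ℝ)-2) ≠ 0 := by linarith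
      have h2 : ((N:ℝ)+2) ≠ 0 := by linarith
      field_simp
      ring
    rw [e2, mul_one_div]
    have elhs : Real.exp (-(1:ℝ)/2) / Real.sqrt (2*π) / 64 * ((k:ℝ)^(2:ℕ))⁻¹
        = (Real.exp (-(1:ℝ)/2) / Real.sqrt (2*π)) / (64 * (k:ℝ)^2) := by
      field_simp
    rw [elhs]
    apply div_le_div_of_nonneg_left (by positivity) (by nlinarith) (by nlinarith)
end

section
/- Let m and k be positive integers with m > 2k+5, let ε > 0, and let α ∈ ℝ. If there exists an m-piecewise constant function f : ℝ → {−1, 1} such that |E_{z∼N(0,1)}[f(z)·z^t]| < ε for every integer 0 ≤ t ≤ k and E_{z∼N(0,1)}[f(z)·ReLU(z)] > α, then there exists an at most (2k+5)-piecewise constant function g : ℝ → {−1, 1} such that |E_{z∼N(0,1)}[g(z)·z^t]| < ε for every integer 0 ≤ t ≤ k and E_{z∼N(0,1)}[g(z)·ReLU(z)] > α. -/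
open MeasureTheory ProbabilityTheory Real Filter Topology Set Metric

set_option maxHeartbeats 1000000

noncomputable section

lemma gauss_integrable_of_exp_bound {ψ : ℝ → ℝ} (hm : AEStronglyMeasurable ψ (gaussianReal 0 1))
    {a : ℝ} (hb : ∀ x, |ψ x| ≤ Real.exp (a * |x|)) : Integrable ψ (gaussianReal 0 1) := by
  have hexp : Integrable (fun x => Real.exp (a * |x|)) (gaussianReal 0 1) := by
    rw [gaussianReal_of_var_ne_zero 0 one_ne_zero, integrable_withDensity_iff
      (measurable_gaussianPDF 0 1) (Eventually.of_forall fun x => ENNReal.ofReal_lt_top)]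
    have heq : ∀ x : ℝ, Real.exp (a * |x|) * ((gaussianPDF 0 1 x).toReal)
        = (√(2 * π))⁻¹ * (Real.exp (a * |x|) * Real.exp (-(x ^ 2) / 2)) := by
      intro x
      rw [gaussianPDF, ENNReal.toReal_ofReal (gaussianPDFReal_nonneg 0 1 x), gaussianPDFReal]
      push_cast
      ring_nf
    simp only [heq]
    apply Integrable.const_mul
    have hbd : ∀ x : ℝ, ‖Real.exp (a * |x|) * Real.exp (-(x ^ 2) / 2)‖
        ≤ Real.exp (a ^ 2) * Real.exp (-(4 : ℝ)⁻¹ * x ^ 2) := by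
      intro x
      rw [norm_of_nonneg (by positivity), ← Real.exp_add, ← Real.exp_add]
      apply Real.exp_le_exp.2
      nlinarith [sq_nonneg (a - |x| / 2), sq_abs x]
    apply Integrable.mono' ((integrable_exp_neg_mul_sq (by norm_num : (0:ℝ) < 4⁻¹)).const_mul
      (Real.exp (a ^ 2)))
    · exact (Real.continuous_exp.comp (continuous_const.mul continuous_abs)).aestronglyMeasurable.mul
        (Real.continuous_exp.comp (by fun_prop)).aestronglyMeasurable
    · exact Eventually.of_forall hbd
  exact hexp.mono' hm (Eventually.of_forall fun x => by
    simpa [abs_eq_self.2 (le_trans (abs_nonneg _) (hb x))] using hb x)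

lemma gauss_integrable_pow (t : ℕ) : Integrable (fun x : ℝ => x ^ t) (gaussianReal 0 1) := by
  apply gauss_integrable_of_exp_bound (by fun_prop)
  intro x
  rw [abs_pow]
  calc |x| ^ t ≤ (Real.exp |x|) ^ t := by
        apply pow_le_pow_left₀ (abs_nonneg x)
        nlinarith [Real.add_one_le_exp |x|, abs_nonneg x]
    _ = Real.exp ((t : ℝ) * |x|) := by rw [← Real.exp_nat_mul]

lemma gauss_integrable_exp : Integrable Real.exp (gaussianReal 0 1) := by
  apply gauss_integrable_of_exp_bound Real.continuous_exp.aestronglyMeasurable (a := 1)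
  intro x
  rw [abs_of_nonneg (Real.exp_pos x).le, one_mul]
  exact Real.exp_le_exp.2 (le_abs_self x)

instance gauss_noAtoms_s10 : NullSingletonClass (gaussianReal 0 1) :=
  ⟨fun x => gaussianReal_absolutelyContinuous 0 one_ne_zero (measure_singleton x)⟩

lemma gauss_integrable_relu : Integrable (fun x : ℝ => max x 0) (gaussianReal 0 1) := by
  apply (gauss_integrable_pow 1).abs.mono' (continuous_id.max continuous_const).aestronglyMeasurable
  refine Eventually.of_forall fun x => ?_
  show ‖max x 0‖ ≤ |x ^ 1|
  rw [pow_one, norm_of_nonneg (le_max_right x 0)]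
  exact max_le (le_abs_self x) (abs_nonneg x)

/-- Rolle-type zero counting: if `f'` has at most `n` zeros (as finsets), `f` has at most
`n+1` zeros. -/
lemma zeros_card_le_of_deriv {f f' : ℝ → ℝ} (hd : ∀ x, HasDerivAt f (f' x) x) {n : ℕ}
    (hf' : ∀ t : Finset ℝ, (∀ x ∈ t, f' x = 0) → t.card ≤ n) :
    ∀ t : Finset ℝ, (∀ x ∈ t, f x = 0) → t.card ≤ n + 1 := by
  intro t ht
  by_contra hlt
  push_neg at hlt
  obtain ⟨s, hst, hcard⟩ := Finset.exists_subset_card_eq (show n + 2 ≤ t.card by omega)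
  have hs0 : ∀ x ∈ s, f x = 0 := fun x hx => ht x (hst hx)
  set e := s.orderIsoOfFin hcard with he
  have hmono : StrictMono fun i : Fin (n + 2) => (e i : ℝ) :=
    fun i j hij => by exact_mod_cast e.strictMono hij
  -- for each i : Fin (n+1), a zero of f' strictly between consecutive points
  have hroll : ∀ i : Fin (n + 1), ∃ c : ℝ,
      c ∈ Set.Ioo (e i.castSucc : ℝ) (e i.succ : ℝ) ∧ f' c = 0 := by
    intro i
    have hlt' : (e i.castSucc : ℝ) < (e i.succ : ℝ) := hmono (Fin.castSucc_lt_succ (i := i))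
    have hcont : ContinuousOn f (Set.Icc (e i.castSucc : ℝ) (e i.succ : ℝ)) :=
      fun x _ => ((hd x).continuousAt).continuousWithinAt
    have heq : f (e i.castSucc : ℝ) = f (e i.succ : ℝ) := by
      rw [hs0 _ (e i.castSucc).2, hs0 _ (e i.succ).2]
    obtain ⟨c, hc, hc0⟩ := exists_deriv_eq_zero hlt' hcont heq
    exact ⟨c, hc, by rwa [(hd c).deriv] at hc0⟩
  choose c hc hc0 using hroll
  have hcmono : StrictMono c := by
    intro i j hij
    calc c i < (e i.succ : ℝ) := (hc i).2
      _ ≤ (e j.castSucc : ℝ) := by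
          rcases eq_or_lt_of_le (Fin.succ_le_castSucc_iff.2 hij) with h | h
          · rw [h]
          · exact (hmono h).le
      _ < c j := (hc j).1
  have hinj : Function.Injective c := hcmono.injective
  have : (Finset.univ.image c).card ≤ n := by
    apply hf'
    intro x hx
    obtain ⟨i, _, rfl⟩ := Finset.mem_image.1 hx
    exact hc0 i
  rw [Finset.card_image_of_injective _ hinj, Finset.card_univ, Fintype.card_fin] at this
  omega

/-- `β exp x = q(x)` has at most `natDegree q + 1` solutions. -/
lemma exp_poly_zeros {β : ℝ} (hβ : β ≠ 0) :
    ∀ (d : ℕ) (q : Polynomial ℝ), q.natDegree ≤ d →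
      ∀ t : Finset ℝ, (∀ x ∈ t, β * Real.exp x - q.eval x = 0) → t.card ≤ d + 1 := by
  intro d
  induction d with
  | zero =>
    intro q hq t ht
    by_contra hlt
    push_neg at hlt
    obtain ⟨s, hst, hcard⟩ := Finset.exists_subset_card_eq (show 2 ≤ t.card by omega)
    rw [Finset.card_eq_two] at hcard
    obtain ⟨x, y, hxy, rfl⟩ := hcard
    have hc := Polynomial.natDegree_eq_zero.1 (Nat.le_zero.1 hq)
    obtain ⟨a, rfl⟩ := hc
    have hx := ht x (hst (by simp))
    have hy := ht y (hst (by simp))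
    simp only [Polynomial.eval_C] at hx hy
    have : Real.exp x = Real.exp y := by
      apply mul_left_cancel₀ hβ
      linarith
    exact hxy (Real.exp_injective this)
  | succ d ih =>
    intro q hq t ht
    have hd : ∀ x : ℝ, HasDerivAt (fun x => β * Real.exp x - q.eval x)
        (β * Real.exp x - q.derivative.eval x) x := by
      intro x
      exact ((Real.hasDerivAt_exp x).const_mul β).sub (q.hasDerivAt x)
    have hq' : q.derivative.natDegree ≤ d :=
      le_trans (Polynomial.natDegree_derivative_le q) (by omega)
    exact zeros_card_le_of_deriv hd (ih q.derivative hq') t ht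

/-- Derivative of `s ↦ ∫ |F - s G|` at `0`, when `F ≠ 0` a.e. -/
lemma l1_deriv {μ : Measure ℝ} {F G : ℝ → ℝ} (hF : Integrable F μ) (hG : Integrable G μ)
    (hnull : ∀ᵐ z ∂μ, F z ≠ 0) :
    Tendsto (fun s : ℝ => ((∫ z, |F z - s * G z| ∂μ) - ∫ z, |F z| ∂μ) / s) (𝓝[≠] 0)
      (𝓝 (-(∫ z, (if 0 ≤ F z then (1:ℝ) else -1) * G z ∂μ))) := by
  have hIs : ∀ s : ℝ, Integrable (fun z => |F z - s * G z|) μ :=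
    fun s => (hF.sub (hG.const_mul s)).abs
  have key : Tendsto (fun s : ℝ => ∫ z, (|F z - s * G z| - |F z|) / s ∂μ) (𝓝[≠] 0)
      (𝓝 (∫ z, -((if 0 ≤ F z then (1:ℝ) else -1) * G z) ∂μ)) := by
    apply tendsto_integral_filter_of_dominated_convergence (fun z => |G z|)
    · refine Eventually.of_forall fun s => ?_
      simp only [div_eq_mul_inv]
      exact ((hIs s).aestronglyMeasurable.sub hF.abs.aestronglyMeasurable).mul_const _
    · filter_upwards [self_mem_nhdsWithin] with s hs
      refine Eventually.of_forall fun z => ?_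
      have hs0 : s ≠ 0 := hs
      rw [norm_div, Real.norm_eq_abs, Real.norm_eq_abs]
      rw [div_le_iff₀ (abs_pos.2 hs0)]
      calc |(|F z - s * G z| - |F z|)| ≤ |(F z - s * G z) - F z| := abs_abs_sub_abs_le_abs_sub _ _
        _ = |(-(s * G z))| := by congr 1; ring
        _ = |s * G z| := abs_neg _
        _ = |G z| * |s| := by rw [abs_mul]; ring
    · exact hG.abs
    · filter_upwards [hnull] with z hz
      have hev : ∀ᶠ s in 𝓝[≠] (0:ℝ),
          (|F z - s * G z| - |F z|) / s = -((if 0 ≤ F z then (1:ℝ) else -1) * G z) := by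
        have hball : Set.Ioo (-(|F z| / (|G z| + 1))) (|F z| / (|G z| + 1)) ∈ 𝓝 (0:ℝ) := by
          apply Ioo_mem_nhds <;> [simp; skip] <;> positivity
        filter_upwards [inter_mem_nhdsWithin _ hball, self_mem_nhdsWithin] with s hsmem hs0
        have hs0' : (s:ℝ) ≠ 0 := hs0
        have hsmall : |s| * (|G z| + 1) < |F z| := by
          obtain ⟨-, hs1, hs2⟩ := hsmem
          have : |s| < |F z| / (|G z| + 1) := abs_lt.2 ⟨hs1, hs2⟩
          calc |s| * (|G z| + 1) < |F z| / (|G z| + 1) * (|G z| + 1) := by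
                apply mul_lt_mul_of_pos_right this; positivity
            _ = |F z| := by field_simp
        have hsG : |s * G z| < |F z| := by
          rw [abs_mul]
          calc |s| * |G z| ≤ |s| * (|G z| + 1) := by nlinarith [abs_nonneg s]
            _ < |F z| := hsmall
        rcases lt_or_ge (F z) 0 with hFz | hFz
        · have h1 : F z - s * G z < 0 := by
            have := neg_abs_le (s * G z); have := abs_of_neg hFz; linarith [abs_lt.1 hsG]
          rw [if_neg (not_le.2 hFz), abs_of_neg hFz, abs_of_neg h1]
          field_simp
          try ring
        · have hFz' : 0 < F z := lt_of_le_of_ne hFz (Ne.symm hz)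
          have h1 : 0 < F z - s * G z := by
            have := abs_lt.1 hsG; rw [abs_of_pos hFz'] at *; linarith [this.2]
          rw [if_pos hFz, abs_of_pos h1, abs_of_pos hFz']
          field_simp
          try ring
      exact Tendsto.congr' (EventuallyEq.symm hev) tendsto_const_nhds
  have hrw : ∀ s : ℝ, s ≠ 0 → ((∫ z, |F z - s * G z| ∂μ) - ∫ z, |F z| ∂μ) / s
      = ∫ z, (|F z - s * G z| - |F z|) / s ∂μ := by
    intro s hs
    rw [← integral_sub (hIs s) hF.abs, ← integral_div]
  rw [← integral_neg]
  apply key.congr'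
  filter_upwards [self_mem_nhdsWithin] with s hs
  exact (hrw s hs).symm

lemma exists_min_of_coercive {K : ℕ} {h : (Fin K → ℝ) → ℝ} (hc : Continuous h)
    {a : ℝ} (ha : 0 < a) (hcoer : ∀ l, a * ‖l‖ ≤ h l) : ∃ l0, ∀ l, h l0 ≤ h l := by
  have h0 : 0 ≤ h 0 := by simpa using hcoer 0
  set R : ℝ := h 0 / a + 1 with hR
  have hR0 : 0 < R := by positivity
  obtain ⟨l0, hl0mem, hl0⟩ := (isCompact_closedBall (0 : Fin K → ℝ) R).exists_isMinOn
    ⟨0, mem_closedBall_self hR0.le⟩ hc.continuousOn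
  refine ⟨l0, fun l => ?_⟩
  rcases le_or_gt ‖l‖ R with hl | hl
  · exact hl0 (by simpa [mem_closedBall, dist_zero_right] using hl)
  · have h1 : h l0 ≤ h 0 := hl0 (mem_closedBall_self hR0.le)
    have h2 : h 0 < a * ‖l‖ := by
      have : h 0 / a + 1 < ‖l‖ := hl
      calc h 0 = a * (h 0 / a) := by field_simp
        _ < a * ‖l‖ := by apply mul_lt_mul_of_pos_left _ ha; linarith
    linarith [hcoer l]

lemma pc_aestronglyMeasurable {m : ℕ} {f : ℝ → ℝ} (hf : PiecewiseConst m f)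
    {μ : Measure ℝ} [NullSingletonClass μ] : AEStronglyMeasurable f μ := by
  obtain ⟨n, -, z, hz⟩ := hf
  set Z : Set ℝ := Set.range z with hZ
  have hZfin : Z.Finite := Set.finite_range z
  have hcont : ∀ x ∉ Z, ContinuousAt f x := by
    intro x hx
    obtain ⟨δ, hδ0, hball⟩ := Metric.isOpen_iff.1 hZfin.isClosed.isOpen_compl x hx
    have hconst : ∀ y ∈ ball x δ, f y = f x := by
      intro y hy
      have hxy : ∀ i, z i ∉ Set.Icc (min x y) (max x y) := by
        intro i hi
        refine hball ?_ (Set.mem_range_self i)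
        rw [mem_ball, Real.dist_eq] at hy ⊢
        obtain ⟨h1, h2⟩ := hi
        rcases abs_lt.1 hy with ⟨hl, hr⟩
        have hmin : x - δ < min x y := by
          rcases le_total x y with h | h
          · rw [min_eq_left h]; linarith
          · rw [min_eq_right h]; linarith
        have hmax : max x y < x + δ := by
          rcases le_total x y with h | h
          · rw [max_eq_right h]; linarith
          · rw [max_eq_left h]; linarith
        rw [abs_lt]
        constructor <;> linarith
      rcases le_total x y with h | h
      · exact (hz x y h (by simpa [min_eq_left h, max_eq_right h] using hxy)).symm
      · exact hz y x h (by simpa [min_eq_right h, max_eq_left h] using hxy)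
    have : f =ᶠ[𝓝 x] fun _ => f x :=
      eventually_of_mem (ball_mem_nhds x hδ0) hconst
    exact Filter.Tendsto.congr' this.symm tendsto_const_nhds
  have hZ0 : μ Z = 0 := hZfin.measure_zero μ
  have : AEStronglyMeasurable f (μ.restrict Zᶜ) :=
    ContinuousOn.aestronglyMeasurable
      (fun x hx => (hcont x hx).continuousWithinAt) hZfin.isClosed.measurableSet.compl
  rwa [Measure.restrict_congr_set (Filter.eventuallyEq_univ.2 ?_), Measure.restrict_univ] at this
  rw [mem_ae_iff]
  simpa using hZ0

/-- If `m > 2k + 5` and there is an `m`-piecewise constant `f : ℝ → {-1, 1}` whose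
Gaussian moments of degree `≤ k` are `< ε` in absolute value and whose Gaussian
correlation with `ReLU` exceeds `α`, then there is an at most `(2k+5)`-piecewise
constant `g : ℝ → {-1, 1}` with the same properties. -/
theorem stmt10 (m k : ℕ) (hm : 0 < m) (hk : 0 < k) (hmk : 2 * k + 5 < m)
    (ε : ℝ) (hε : 0 < ε) (α : ℝ)
    (f : ℝ → ℝ) (hf_val : ∀ z, f z = 1 ∨ f z = -1) (hf_pc : PiecewiseConst m f)
    (hmom : ∀ t : ℕ, t ≤ k → |∫ z, f z * z ^ t ∂(gaussianReal 0 1)| < ε)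
    (hcorr : α < ∫ z, f z * max z 0 ∂(gaussianReal 0 1)) :
    ∃ g : ℝ → ℝ, (∀ z, g z = 1 ∨ g z = -1) ∧ PiecewiseConst (2 * k + 5) g ∧
      (∀ t : ℕ, t ≤ k → |∫ z, g z * z ^ t ∂(gaussianReal 0 1)| < ε) ∧
      α < ∫ z, g z * max z 0 ∂(gaussianReal 0 1) := by
  classical
  set γ : Measure ℝ := gaussianReal 0 1 with hγdef
  have hfm : AEStronglyMeasurable f γ := pc_aestronglyMeasurable hf_pc
  have hfb : ∀ᵐ z ∂γ, ‖f z‖ ≤ 1 :=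
    Eventually.of_forall fun z => by rcases hf_val z with h | h <;> simp [h]
  have hPow : ∀ t : ℕ, Integrable (fun z : ℝ => z ^ t) γ := gauss_integrable_pow
  have hExp : Integrable Real.exp γ := gauss_integrable_exp
  have hRelu : Integrable (fun z : ℝ => max z 0) γ := gauss_integrable_relu
  have hfmul : ∀ {ψ : ℝ → ℝ}, Integrable ψ γ → Integrable (fun z => f z * ψ z) γ :=
    fun hψ => hψ.bdd_mul hfm hfb
  set E : ℝ := ∫ z, Real.exp z ∂γ with hE
  have hE0 : 0 ≤ E := integral_nonneg fun z => (Real.exp_pos z).le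
  set d : ℝ := (∫ z, f z * max z 0 ∂γ) - α with hd
  have hd0 : 0 < d := sub_pos.2 hcorr
  set β : ℝ := d / (4 * E + 4) with hβdef
  have hβ0 : 0 < β := by positivity
  set Φ : ℝ → ℝ := fun z => max z 0 + β * Real.exp z with hΦ
  have hΦint : Integrable Φ γ := hRelu.add (hExp.const_mul β)
  have hΦcont : Continuous Φ :=
    (continuous_id.max continuous_const).add (continuous_const.mul Real.continuous_exp)
  set c : Fin (k + 1) → ℝ := fun i => |∫ z, f z * z ^ (i : ℕ) ∂γ| with hc
  have hcnn : ∀ i, 0 ≤ c i := fun i => abs_nonneg _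
  have hcε : ∀ i, c i < ε := fun i => hmom i (Nat.lt_succ_iff.1 i.2)
  set e : Fin (k + 1) → ℝ := fun i => (c i + ε) / 2 with he
  have hce : ∀ i, c i < e i := fun i => by have := hcε i; simp only [he]; linarith
  have heε : ∀ i, e i < ε := fun i => by have := hcε i; have := hcnn i; simp only [he]; linarith
  have heh : ∀ i, ε / 2 ≤ e i := fun i => by have := hcnn i; simp only [he]; linarith
  have hepos : ∀ i, 0 < e i := fun i => lt_of_lt_of_le (half_pos hε) (heh i)
  set P : (Fin (k + 1) → ℝ) → ℝ → ℝ := fun l z => ∑ i, l i * z ^ (i : ℕ) with hP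
  have hPcont : ∀ l, Continuous (P l) :=
    fun l => continuous_finset_sum _ fun i _ => continuous_const.mul (continuous_pow _)
  have hPint : ∀ l, Integrable (P l) γ :=
    fun l => integrable_finset_sum _ fun i _ => (hPow i).const_mul _
  set Ψ : (Fin (k + 1) → ℝ) → ℝ := fun l => ∫ z, |Φ z - P l z| ∂γ with hΨ
  set h : (Fin (k + 1) → ℝ) → ℝ := fun l => (∑ i, e i * |l i|) + Ψ l with hh
  -- continuity of h
  have hΨcont : Continuous Ψ := by
    rw [continuous_iff_continuousAt]
    intro l₀
    apply continuousAt_of_dominated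
      (bound := fun z => |Φ z| + ∑ i, (|l₀ i| + 1) * |z| ^ (i : ℕ))
    · exact Eventually.of_forall fun l => ((hΦcont.sub (hPcont l)).abs).aestronglyMeasurable
    · filter_upwards [ball_mem_nhds l₀ one_pos] with l hl
      refine Eventually.of_forall fun z => ?_
      have hli : ∀ i, |l i| ≤ |l₀ i| + 1 := by
        intro i
        have h1 : dist (l i) (l₀ i) ≤ dist l l₀ := dist_le_pi_dist l l₀ i
        have h2 : dist l l₀ < 1 := mem_ball.1 hl
        rw [Real.dist_eq] at h1
        have h3 : |l i| - |l₀ i| ≤ |l i - l₀ i| := abs_sub_abs_le_abs_sub _ _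
        linarith
      rw [Real.norm_eq_abs, abs_abs]
      have h4 : |P l z| ≤ ∑ i, (|l₀ i| + 1) * |z| ^ (i : ℕ) := by
        refine (Finset.abs_sum_le_sum_abs _ _).trans (Finset.sum_le_sum fun i _ => ?_)
        rw [abs_mul, abs_pow]
        exact mul_le_mul_of_nonneg_right (hli i) (pow_nonneg (abs_nonneg _) _)
      calc |Φ z - P l z| ≤ |Φ z| + |P l z| := by
            rw [sub_eq_add_neg]; exact (abs_add_le _ _).trans (by rw [abs_neg])
        _ ≤ _ := by linarith
    · exact hΦint.abs.add (integrable_finset_sum _ fun i _ => by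
        simpa [← abs_pow] using ((hPow i).abs.const_mul (|l₀ i| + 1)))
    · refine Eventually.of_forall fun z => Continuous.continuousAt ?_
      exact (continuous_const.sub (continuous_finset_sum _ fun i _ =>
        (continuous_apply i).mul continuous_const)).abs
  have hhcont : Continuous h :=
    (continuous_finset_sum _ fun i _ => continuous_const.mul (continuous_apply i).abs).add hΨcont
  -- coercivity
  have hcoer : ∀ l, ε / 2 * ‖l‖ ≤ h l := by
    intro l
    have h1 : 0 ≤ Ψ l := integral_nonneg fun z => abs_nonneg _
    have hnorm : ‖l‖ ≤ ∑ i, |l i| := by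
      rw [pi_norm_le_iff_of_nonneg (Finset.sum_nonneg fun i _ => abs_nonneg _)]
      intro i
      rw [Real.norm_eq_abs]
      exact Finset.single_le_sum (f := fun j => |l j|) (fun j _ => abs_nonneg _) (Finset.mem_univ i)
    have h3 : ε / 2 * ‖l‖ ≤ ∑ i, e i * |l i| := by
      calc ε / 2 * ‖l‖ ≤ ε / 2 * ∑ i, |l i| :=
            mul_le_mul_of_nonneg_left hnorm (by linarith)
        _ = ∑ i, ε / 2 * |l i| := Finset.mul_sum _ _ _
        _ ≤ ∑ i, e i * |l i| := Finset.sum_le_sum fun i _ =>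
            mul_le_mul_of_nonneg_right (heh i) (abs_nonneg _)
    simp only [hh]
    linarith
  obtain ⟨l0, hl0⟩ := exists_min_of_coercive hhcont (half_pos hε) hcoer
  set F : ℝ → ℝ := fun z => Φ z - P l0 z with hF
  have hFcont : Continuous F := hΦcont.sub (hPcont l0)
  have hFint : Integrable F γ := hΦint.sub (hPint l0)
  -- the zero set of F
  set S : Set ℝ := {z | F z = 0} with hS
  have hScard : ∀ t : Finset ℝ, ↑t ⊆ S → t.card ≤ 2 * k + 2 := by
    intro t ht
    have hQdeg : ∀ q0 : Polynomial ℝ, q0 = ∑ i : Fin (k+1), Polynomial.C (l0 i) *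
        Polynomial.X ^ (i : ℕ) → q0.natDegree ≤ k := by
      intro q0 hq0
      rw [hq0]
      apply Polynomial.natDegree_sum_le_of_forall_le
      intro i _
      refine (Polynomial.natDegree_C_mul_le _ _).trans ?_
      rw [Polynomial.natDegree_X_pow]
      exact Nat.lt_succ_iff.1 i.2
    set q : Polynomial ℝ := ∑ i : Fin (k+1), Polynomial.C (l0 i) * Polynomial.X ^ (i : ℕ)
      with hq
    have hqev : ∀ x : ℝ, q.eval x = P l0 x := by
      intro x
      rw [hq, Polynomial.eval_finset_sum]
      exact Finset.sum_congr rfl fun i _ => by simp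
    have hdeg : q.natDegree ≤ k := hQdeg q hq
    have hsplit := Finset.card_filter_add_card_filter_not (s := t) (p := fun x => 0 < x)
    have hcard_pos : (t.filter (fun x => 0 < x)).card ≤ k + 1 := by
      apply exp_poly_zeros (ne_of_gt hβ0) k (q - Polynomial.X)
        ((Polynomial.natDegree_sub_le _ _).trans
          (by rw [Polynomial.natDegree_X]; exact sup_le hdeg hk))
      intro x hx
      obtain ⟨hxt, hx0⟩ := Finset.mem_filter.1 hx
      have hFx : F x = 0 := ht hxt
      rw [Polynomial.eval_sub, Polynomial.eval_X, hqev]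
      simp only [hF, hΦ] at hFx
      rw [max_eq_left hx0.le] at hFx
      linarith
    have hcard_neg : (t.filter (fun x => ¬ 0 < x)).card ≤ k + 1 := by
      apply exp_poly_zeros (ne_of_gt hβ0) k q hdeg
      intro x hx
      obtain ⟨hxt, hx0⟩ := Finset.mem_filter.1 hx
      have hFx : F x = 0 := ht hxt
      rw [hqev]
      simp only [hF, hΦ] at hFx
      rw [max_eq_right (not_lt.1 hx0)] at hFx
      linarith
    omega
  have hSfin : S.Finite := by
    by_contra hinf
    obtain ⟨t, hts, htc⟩ := (show S.Infinite from hinf).exists_subset_card_eq (2 * k + 3)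
    have := hScard t hts
    omega
  have hnull : ∀ᵐ z ∂γ, F z ≠ 0 := by
    rw [ae_iff]
    convert hSfin.measure_zero γ using 2
    simp [hS]
  set g : ℝ → ℝ := fun z => if 0 ≤ F z then 1 else -1 with hg
  have hgval : ∀ z, g z = 1 ∨ g z = -1 := by
    intro z
    by_cases hz : 0 ≤ F z <;> simp [hg, hz]
  have hgm : AEStronglyMeasurable g γ :=
    (Measurable.ite (measurableSet_le measurable_const hFcont.measurable)
      measurable_const measurable_const).aestronglyMeasurable
  have hgb : ∀ᵐ z ∂γ, ‖g z‖ ≤ 1 :=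
    Eventually.of_forall fun z => by rcases hgval z with h | h <;> simp [h]
  have hgmul : ∀ {ψ : ℝ → ℝ}, Integrable ψ γ → Integrable (fun z => g z * ψ z) γ :=
    fun hψ => hψ.bdd_mul hgm hgb
  set D : Fin (k + 1) → ℝ := fun i => ∫ z, g z * z ^ (i : ℕ) ∂γ with hD
  -- optimality conditions
  have hopt : ∀ i : Fin (k + 1), |D i| ≤ e i ∧ l0 i * D i = e i * |l0 i| := by
    intro i
    set φ : ℝ → ℝ := fun s => ∫ z, |F z - s * z ^ (i : ℕ)| ∂γ with hφ
    have hφ0 : φ 0 = ∫ z, |F z| ∂γ := by simp [hφ]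
    have hT : Tendsto (fun s => (φ s - φ 0) / s) (𝓝[≠] 0) (𝓝 (-(D i))) := by
      rw [hφ0]
      exact l1_deriv hFint (hPow i) hnull
    have hmin : ∀ s : ℝ, e i * |l0 i| + φ 0 ≤ e i * |l0 i + s| + φ s := by
      intro s
      have h1 := hl0 (Function.update l0 i (l0 i + s))
      have hsum : (∑ j, e j * |Function.update l0 i (l0 i + s) j|)
          = e i * |l0 i + s| + ∑ j ∈ Finset.univ \ {i}, e j * |l0 j| := by
        rw [show (fun j => e j * |Function.update l0 i (l0 i + s) j|)
            = Function.update (fun j => e j * |l0 j|) i (e i * |l0 i + s|) from ?_]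
        · exact Finset.sum_update_of_mem (Finset.mem_univ i) _ _
        · funext j
          rcases eq_or_ne j i with rfl | hji
          · simp
          · simp [Function.update_of_ne hji]
      have hsum0 : (∑ j, e j * |l0 j|)
          = (∑ j ∈ Finset.univ \ {i}, e j * |l0 j|) + e i * |l0 i| :=
        Finset.sum_eq_sum_sdiff_singleton_add (Finset.mem_univ i) _
      have hPupd : Ψ (Function.update l0 i (l0 i + s)) = φ s := by
        have hupd : ∀ z : ℝ, P (Function.update l0 i (l0 i + s)) z
            = P l0 z + s * z ^ (i : ℕ) := by
          intro z
          simp only [hP]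
          rw [show (fun j => Function.update l0 i (l0 i + s) j * z ^ (j : ℕ))
              = Function.update (fun j => l0 j * z ^ (j : ℕ)) i ((l0 i + s) * z ^ (i : ℕ))
              from ?_]
          · rw [Finset.sum_update_of_mem (Finset.mem_univ i),
              Finset.sum_eq_sum_sdiff_singleton_add (Finset.mem_univ i)
                (fun j => l0 j * z ^ (j : ℕ))]
            ring
          · funext j
            rcases eq_or_ne j i with rfl | hji
            · simp
            · simp [Function.update_of_ne hji]
        have hzz : ∀ z : ℝ, |Φ z - P (Function.update l0 i (l0 i + s)) z|
            = |F z - s * z ^ (i : ℕ)| := by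
          intro z
          rw [hupd z]
          congr 1
          simp only [hF]
          ring
        simp only [hΨ, hφ]
        exact integral_congr_ae (Eventually.of_forall fun z => hzz z)
      simp only [hh] at h1
      rw [hsum, hPupd, hsum0] at h1
      have hψl0 : Ψ l0 = φ 0 := by rw [hφ0]; try rfl
      rw [hψl0] at h1
      linarith
    have henn : 0 ≤ e i := (hepos i).le
    have hmono_gt : 𝓝[>] (0:ℝ) ≤ 𝓝[≠] 0 :=
      nhdsWithin_mono _ fun x (hx : 0 < x) => (ne_of_gt hx : x ≠ 0)
    have hmono_lt : 𝓝[<] (0:ℝ) ≤ 𝓝[≠] 0 :=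
      nhdsWithin_mono _ fun x (hx : x < 0) => (ne_of_lt hx : x ≠ 0)
    have hub : D i ≤ e i := by
      have hle : ∀ᶠ s in 𝓝[>] (0:ℝ), -(e i) ≤ (φ s - φ 0) / s := by
        filter_upwards [self_mem_nhdsWithin] with s hs
        have hs0 : (0:ℝ) < s := hs
        have habs : |l0 i + s| - |l0 i| ≤ s := by
          have h5 : |l0 i + s| ≤ |l0 i| + |s| := abs_add_le _ _
          rw [abs_of_pos hs0] at h5
          linarith
        have h6 := hmin s
        rw [le_div_iff₀ hs0]
        nlinarith
      have := ge_of_tendsto (hT.mono_left hmono_gt) hle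
      linarith
    have hlb : -(e i) ≤ D i := by
      have hle : ∀ᶠ s in 𝓝[<] (0:ℝ), (φ s - φ 0) / s ≤ e i := by
        filter_upwards [self_mem_nhdsWithin] with s hs
        have hs0 : s < (0:ℝ) := hs
        have habs : |l0 i + s| - |l0 i| ≤ -s := by
          have h5 : |l0 i + s| ≤ |l0 i| + |s| := abs_add_le _ _
          rw [abs_of_neg hs0] at h5
          linarith
        have h6 := hmin s
        rw [div_le_iff_of_neg hs0]
        nlinarith
      have := le_of_tendsto (hT.mono_left hmono_lt) hle
      linarith
    refine ⟨abs_le.2 ⟨hlb, hub⟩, ?_⟩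
    rcases lt_trichotomy (l0 i) 0 with hl | hl | hl
    · -- D i = -(e i)
      have hDe : D i ≤ -(e i) := by
        have hle : ∀ᶠ s in 𝓝[>] (0:ℝ), e i ≤ (φ s - φ 0) / s := by
          filter_upwards [Ioo_mem_nhdsGT_of_mem (Set.mem_Ico.2 ⟨le_refl 0, neg_pos.2 hl⟩)]
            with s hs
          obtain ⟨hs0, hs1⟩ := hs
          have habs : |l0 i + s| = |l0 i| - s := by
            rw [abs_of_neg hl, abs_of_neg (by linarith : l0 i + s < 0)]
            ring
          have h6 := hmin s
          rw [le_div_iff₀ hs0]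
          nlinarith
        have := ge_of_tendsto (hT.mono_left hmono_gt) hle
        linarith
      have : D i = -(e i) := le_antisymm hDe hlb
      rw [this, abs_of_neg hl]
      ring
    · simp [hl]
    · -- D i = e i
      have hDe : e i ≤ D i := by
        have hle : ∀ᶠ s in 𝓝[<] (0:ℝ), (φ s - φ 0) / s ≤ -(e i) := by
          filter_upwards [Ioo_mem_nhdsLT_of_mem (Set.mem_Ioc.2 ⟨neg_lt_zero.2 hl, le_refl 0⟩)]
            with s hs
          obtain ⟨hs0, hs1⟩ := hs
          have habs : |l0 i + s| = |l0 i| + s := by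
            rw [abs_of_pos hl, abs_of_pos (by linarith : 0 < l0 i + s)]
          have h6 := hmin s
          rw [div_le_iff_of_neg hs1]
          nlinarith
        have := le_of_tendsto (hT.mono_left hmono_lt) hle
        linarith
      have : D i = e i := le_antisymm hub hDe
      rw [this, abs_of_pos hl]
      ring
  -- integral identities
  have hgF : ∫ z, g z * F z ∂γ = ∫ z, |F z| ∂γ := by
    apply integral_congr_ae
    refine Eventually.of_forall fun z => ?_
    by_cases hz : 0 ≤ F z
    · simp [hg, hz, abs_of_nonneg hz]
    · simp only [hg, if_neg hz]
      rw [abs_of_neg (not_le.1 hz)]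
      ring
  have hgP : ∫ z, g z * P l0 z ∂γ = ∑ i, l0 i * D i := by
    have h1 : ∀ z, g z * P l0 z = ∑ i, l0 i * (g z * z ^ (i : ℕ)) := by
      intro z
      simp only [hP]
      rw [Finset.mul_sum]
      exact Finset.sum_congr rfl fun i _ => by ring
    rw [integral_congr_ae (Eventually.of_forall h1)]
    rw [integral_finset_sum _ (f := fun (i : Fin (k+1)) (z : ℝ) => l0 i * (g z * z ^ (i : ℕ)))
      (fun i _ => (hgmul (hPow i)).const_mul (l0 i))]
    exact Finset.sum_congr rfl fun i _ => integral_const_mul _ _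
  have hgΦ : ∫ z, g z * Φ z ∂γ = h l0 := by
    have h1 : ∀ z, g z * Φ z = g z * P l0 z + g z * F z := by
      intro z
      simp only [hF]
      ring
    rw [integral_congr_ae (Eventually.of_forall h1),
      integral_add (hgmul (hPint l0)) (hgmul hFint), hgP, hgF]
    simp only [hh, hΨ, hF]
    congr 1
    exact Finset.sum_congr rfl fun i _ => (hopt i).2
  have hfΦ : ∫ z, f z * Φ z ∂γ ≤ h l0 := by
    have h1 : ∀ z, f z * Φ z = f z * P l0 z + f z * F z := by
      intro z
      simp only [hF]
      ring
    have h2 : ∫ z, f z * P l0 z ∂γ = ∑ i, l0 i * ∫ z, f z * z ^ (i : ℕ) ∂γ := by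
      have h1' : ∀ z, f z * P l0 z = ∑ i, l0 i * (f z * z ^ (i : ℕ)) := by
        intro z
        simp only [hP]
        rw [Finset.mul_sum]
        exact Finset.sum_congr rfl fun i _ => by ring
      rw [integral_congr_ae (Eventually.of_forall h1')]
      rw [integral_finset_sum _ (f := fun (i : Fin (k+1)) (z : ℝ) => l0 i * (f z * z ^ (i : ℕ)))
        (fun i _ => (hfmul (hPow i)).const_mul (l0 i))]
      exact Finset.sum_congr rfl fun i _ => integral_const_mul _ _
    have h3 : ∑ i, l0 i * ∫ z, f z * z ^ (i : ℕ) ∂γ ≤ ∑ i, e i * |l0 i| := by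
      refine Finset.sum_le_sum fun i _ => ?_
      calc l0 i * ∫ z, f z * z ^ (i : ℕ) ∂γ ≤ |l0 i * ∫ z, f z * z ^ (i : ℕ) ∂γ| :=
            le_abs_self _
        _ = |l0 i| * c i := by rw [abs_mul]
        _ ≤ |l0 i| * e i := mul_le_mul_of_nonneg_left (hce i).le (abs_nonneg _)
        _ = e i * |l0 i| := mul_comm _ _
    have h4 : ∫ z, f z * F z ∂γ ≤ ∫ z, |F z| ∂γ := by
      apply integral_mono (hfmul hFint) hFint.abs
      intro z
      calc f z * F z ≤ |f z * F z| := le_abs_self _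
        _ = |f z| * |F z| := abs_mul _ _
        _ = |F z| := by rcases hf_val z with hv | hv <;> simp [hv]
    calc ∫ z, f z * Φ z ∂γ
        = (∫ z, f z * P l0 z ∂γ) + ∫ z, f z * F z ∂γ := by
          rw [← integral_add (hfmul (hPint l0)) (hfmul hFint)]
          exact integral_congr_ae (Eventually.of_forall h1)
      _ ≤ (∑ i, e i * |l0 i|) + ∫ z, |F z| ∂γ := by
          rw [h2]; exact add_le_add h3 h4
      _ = h l0 := by simp only [hh, hΨ, hF]
  -- correlation bound
  have habs_eq : ∀ u : ℝ → ℝ, (∀ z, u z = 1 ∨ u z = -1) →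
      |∫ z, u z * Real.exp z ∂γ| ≤ E := by
    intro u hu
    calc |∫ z, u z * Real.exp z ∂γ| ≤ ∫ z, |u z| * Real.exp z ∂γ := by
          simpa [Real.norm_eq_abs] using
            norm_integral_le_integral_norm (fun z => u z * Real.exp z) (μ := γ)
      _ = E := by
          apply integral_congr_ae
          refine Eventually.of_forall fun z => ?_
          rcases hu z with hv | hv <;> simp [hv]
  have hgexp : |∫ z, g z * Real.exp z ∂γ| ≤ E := habs_eq g hgval
  have hfexp : |∫ z, f z * Real.exp z ∂γ| ≤ E := habs_eq f hf_val
  have hgsplit : ∫ z, g z * Φ z ∂γ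
      = (∫ z, g z * max z 0 ∂γ) + β * ∫ z, g z * Real.exp z ∂γ := by
    rw [← integral_const_mul, ← integral_add (hgmul hRelu) ((hgmul hExp).const_mul β)]
    apply integral_congr_ae
    refine Eventually.of_forall fun z => ?_
    simp only [hΦ]
    ring
  have hfsplit : ∫ z, f z * Φ z ∂γ
      = (∫ z, f z * max z 0 ∂γ) + β * ∫ z, f z * Real.exp z ∂γ := by
    rw [← integral_const_mul, ← integral_add (hfmul hRelu) ((hfmul hExp).const_mul β)]
    apply integral_congr_ae
    refine Eventually.of_forall fun z => ?_
    simp only [hΦ]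
    ring
  have hβE : 2 * (β * E) < d := by
    have h1 : β * (4 * E + 4) = d := by
      rw [hβdef]
      exact div_mul_cancel₀ _ (by linarith : (4 : ℝ) * E + 4 ≠ 0)
    have h4 : 0 < β * (2 * E + 4) := mul_pos hβ0 (by linarith)
    have h5 : β * (4 * E + 4) = 2 * (β * E) + β * (2 * E + 4) := by ring
    linarith
  have hgRelu : α < ∫ z, g z * max z 0 ∂γ := by
    have h1 : ∫ z, g z * max z 0 ∂γ = (∫ z, g z * Φ z ∂γ) - β * ∫ z, g z * Real.exp z ∂γ := by
      rw [hgsplit]; ring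
    have h2 : β * ∫ z, g z * Real.exp z ∂γ ≤ β * E := by
      apply mul_le_mul_of_nonneg_left _ hβ0.le
      exact (le_abs_self _).trans hgexp
    have h3 : -(β * E) ≤ β * ∫ z, f z * Real.exp z ∂γ := by
      have h3' : -E ≤ ∫ z, f z * Real.exp z ∂γ := (abs_le.1 hfexp).1
      calc -(β * E) = β * (-E) := by ring
        _ ≤ β * ∫ z, f z * Real.exp z ∂γ := mul_le_mul_of_nonneg_left h3' hβ0.le
    have h5 : ∫ z, f z * Φ z ∂γ ≥ (∫ z, f z * max z 0 ∂γ) - β * E := by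
      rw [hfsplit]
      linarith
    have h6 : ∫ z, f z * max z 0 ∂γ = α + d := by rw [hd]; ring
    rw [hgΦ] at hgsplit
    linarith
  -- final packaging
  refine ⟨g, hgval, ?_, ?_, hgRelu⟩
  · rw [show PiecewiseConst (2 * k + 5) g ↔
        (∃ n : ℕ, n ≤ (2 * k + 5) - 1 ∧ ∃ z : Fin n → ℝ,
          ∀ x y : ℝ, x ≤ y → (∀ i, z i ∉ Set.Icc x y) → g x = g y) from Iff.rfl]
    refine ⟨hSfin.toFinset.card, ?_, fun i => ((hSfin.toFinset.equivFin.symm i : ℝ)), ?_⟩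
    · have := hScard hSfin.toFinset (by simp)
      omega
    · intro x y hxy hz
      have hnozero : ∀ w ∈ Set.Icc x y, F w ≠ 0 := by
        intro w hw hw0
        have hwT : w ∈ hSfin.toFinset := hSfin.mem_toFinset.2 hw0
        exact hz (hSfin.toFinset.equivFin ⟨w, hwT⟩) (by simpa using hw)
      have hFx : F x ≠ 0 := hnozero x ⟨le_refl x, hxy⟩
      have hFy : F y ≠ 0 := hnozero y ⟨hxy, le_refl y⟩
      by_cases hx0 : 0 ≤ F x <;> by_cases hy0 : 0 ≤ F y
      · simp [hg, hx0, hy0]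
      · exfalso
        obtain ⟨w, hw, hw0⟩ := intermediate_value_Icc' hxy hFcont.continuousOn
          (Set.mem_Icc.2 ⟨(not_le.1 hy0).le, lt_of_le_of_ne hx0 (Ne.symm hFx) |>.le⟩)
        exact hnozero w hw hw0
      · exfalso
        obtain ⟨w, hw, hw0⟩ := intermediate_value_Icc hxy hFcont.continuousOn
          (Set.mem_Icc.2 ⟨(not_le.1 hx0).le, lt_of_le_of_ne hy0 (Ne.symm hFy) |>.le⟩)
        exact hnozero w hw hw0
      · simp [hg, hx0, hy0]
  · intro t ht
    have hi : t < k + 1 := by omega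
    have : ∫ z, g z * z ^ t ∂γ = D ⟨t, hi⟩ := by rw [hD]
    rw [this]
    exact lt_of_le_of_lt (hopt ⟨t, hi⟩).1 (heε ⟨t, hi⟩)

end
end

section
/- For every ε > 0 and all real numbers a and b, ∫_{−ε}^{ε} (|z|/2 − a·z − b)² dz ≥ ε³/24. -/
open MeasureTheory intervalIntegral

lemma quad_int (c d p q : ℝ) :
    ∫ z in p..q, (c * z + d) ^ 2 =
      (c ^ 2 * q ^ 3 / 3 + c * d * q ^ 2 + d ^ 2 * q)
        - (c ^ 2 * p ^ 3 / 3 + c * d * p ^ 2 + d ^ 2 * p) := by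
  have h : ∀ z ∈ Set.uIcc p q,
      HasDerivAt (fun z : ℝ => c ^ 2 * z ^ 3 / 3 + c * d * z ^ 2 + d ^ 2 * z)
        ((c * z + d) ^ 2) z := by
    intro z _
    have h1 : HasDerivAt (fun z : ℝ => c ^ 2 * z ^ 3 / 3 + c * d * z ^ 2 + d ^ 2 * z)
        (c ^ 2 / 3 * (3 * z ^ 2) + c * d * (2 * z) + d ^ 2 * (1 * z ^ 0)) z := by
      have := (((hasDerivAt_pow 3 z).const_mul (c ^ 2 / 3)).add
        ((hasDerivAt_pow 2 z).const_mul (c * d))).add ((hasDerivAt_pow 1 z).const_mul (d ^ 2))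
      exact (this.congr_deriv (by norm_num)).congr_of_eventuallyEq
        (Filter.Eventually.of_forall fun x => by simp only [Pi.add_apply]; ring)
    convert h1 using 1
    ring
  rw [intervalIntegral.integral_eq_sub_of_hasDerivAt h
    ((Continuous.intervalIntegrable (by continuity) p q))]

/-- For every `ε > 0` and all reals `a, b`,
`∫_{-ε}^{ε} (|z|/2 - a z - b)² dz ≥ ε³/24`. -/
theorem stmt12 (ε : ℝ) (hε : 0 < ε) (a b : ℝ) :
    ε ^ 3 / 24 ≤ ∫ z in (-ε)..ε, (|z| / 2 - a * z - b) ^ 2 := by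
  have hcont : Continuous fun z : ℝ => (|z| / 2 - a * z - b) ^ 2 := by continuity
  have hi1 : IntervalIntegrable (fun z : ℝ => (|z| / 2 - a * z - b) ^ 2) volume (-ε) 0 :=
    hcont.intervalIntegrable _ _
  have hi2 : IntervalIntegrable (fun z : ℝ => (|z| / 2 - a * z - b) ^ 2) volume 0 ε :=
    hcont.intervalIntegrable _ _
  rw [← intervalIntegral.integral_add_adjacent_intervals hi1 hi2]
  have e1 : ∫ z in (-ε)..(0:ℝ), (|z| / 2 - a * z - b) ^ 2
      = ∫ z in (-ε)..(0:ℝ), ((-1/2 - a) * z + (-b)) ^ 2 := by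
    apply intervalIntegral.integral_congr
    intro z hz
    rw [Set.uIcc_of_le (by linarith)] at hz
    show (|z| / 2 - a * z - b) ^ 2 = ((-1/2 - a) * z + (-b)) ^ 2
    rw [abs_of_nonpos hz.2]; ring
  have e2 : ∫ z in (0:ℝ)..ε, (|z| / 2 - a * z - b) ^ 2
      = ∫ z in (0:ℝ)..ε, ((1/2 - a) * z + (-b)) ^ 2 := by
    apply intervalIntegral.integral_congr
    intro z hz
    rw [Set.uIcc_of_le hε.le] at hz
    show (|z| / 2 - a * z - b) ^ 2 = ((1/2 - a) * z + (-b)) ^ 2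
    rw [abs_of_nonneg hz.1]; ring
  rw [e1, e2, quad_int, quad_int]
  nlinarith [mul_nonneg (mul_nonneg (mul_nonneg hε.le hε.le) hε.le) (sq_nonneg a),
    mul_nonneg hε.le (sq_nonneg (b - ε/4)), sq_nonneg a, sq_nonneg (b - ε/4), hε.le]
end

section
/- There exist absolute constants c > 0 and C > 0 such that for every integer k ≥ 1 and every polynomial p of degree at most k, ∫_{−1}^{1} (ReLU(z) − p(z))² dz ≥ c·k^{−C}. -/
open MeasureTheory intervalIntegral Polynomial Real

namespace Stmt15Aux

noncomputable def W (n : ℕ) : Polynomial ℝ := ((1 : Polynomial ℝ) - X ^ 2) ^ n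

noncomputable def Q (n : ℕ) : Polynomial ℝ := derivative^[n] (W n)

lemma W_eval (n : ℕ) (x : ℝ) : (W n).eval x = (1 - x ^ 2) ^ n := by simp [W]

lemma W_ne_zero (n : ℕ) : W n ≠ 0 := by
  intro h
  have h0 : (W n).eval 0 = 0 := by rw [h]; simp
  rw [W_eval] at h0
  norm_num at h0

lemma iter_deriv_W_root (n i : ℕ) (hi : i < n) (s : ℝ) (hs : s = 1 ∨ s = -1) :
    (derivative^[i] (W n)).eval s = 0 := by
  have hbase : (X - C s) ∣ ((1 : Polynomial ℝ) - X ^ 2) := by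
    rcases hs with rfl | rfl
    · exact ⟨-(X + 1), by simp only [C_1]; ring⟩
    · exact ⟨1 - X, by simp only [map_neg, C_1]; ring⟩
  have hdvd : (X - C s) ^ n ∣ W n := pow_dvd_pow_of_dvd hbase n
  have hmul : n ≤ (W n).rootMultiplicity s :=
    (le_rootMultiplicity_iff (W_ne_zero n)).mpr hdvd
  exact isRoot_iterate_derivative_of_lt_rootMultiplicity (lt_of_lt_of_le hi hmul)

/-- integration by parts for polynomials -/
lemma ibp (A B : Polynomial ℝ) (a b : ℝ) :
    ∫ x in a..b, (derivative A).eval x * B.eval x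
      = A.eval b * B.eval b - A.eval a * B.eval a
        - ∫ x in a..b, A.eval x * (derivative B).eval x := by
  have h := intervalIntegral.integral_mul_deriv_eq_deriv_mul
    (u := fun x => B.eval x) (u' := fun x => (derivative B).eval x)
    (v := fun x => A.eval x) (v' := fun x => (derivative A).eval x)
    (fun x _ => B.hasDerivAt x) (fun x _ => A.hasDerivAt x)
    ((derivative B).continuous.intervalIntegrable a b)
    ((derivative A).continuous.intervalIntegrable a b)
  calc ∫ x in a..b, (derivative A).eval x * B.eval x
      = ∫ x in a..b, B.eval x * (derivative A).eval x := by
        simp only [mul_comm]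
    _ = B.eval b * A.eval b - B.eval a * A.eval a
        - ∫ x in a..b, (derivative B).eval x * A.eval x := h
    _ = A.eval b * B.eval b - A.eval a * B.eval a
        - ∫ x in a..b, A.eval x * (derivative B).eval x := by
        rw [intervalIntegral.integral_congr (g := fun x => A.eval x * (derivative B).eval x)
          (fun x _ => mul_comm _ _)]
        ring

lemma iter_succ' (P : Polynomial ℝ) (i : ℕ) (hi : 1 ≤ i) :
    derivative^[i] P = derivative (derivative^[i-1] P) := by
  have h : i = (i - 1) + 1 := by omega
  rw [h, Function.iterate_succ_apply', Nat.add_sub_cancel]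

lemma key (n : ℕ) (p : Polynomial ℝ) (j : ℕ) (hj : j ≤ n) :
    ∫ x in (-1:ℝ)..1, (Q n).eval x * p.eval x
      = (-1 : ℝ) ^ j *
        ∫ x in (-1:ℝ)..1, (derivative^[n - j] (W n)).eval x * (derivative^[j] p).eval x := by
  induction j with
  | zero => simp [Q]
  | succ j ih =>
    have hj' : j ≤ n := Nat.le_of_succ_le hj
    rw [ih hj']
    have hnj : n - j = (n - (j + 1)) + 1 := by omega
    have hD : derivative^[n - j] (W n) = derivative (derivative^[n - (j+1)] (W n)) := by
      rw [hnj, Function.iterate_succ_apply']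
    rw [hD, ibp]
    rw [iter_deriv_W_root n (n - (j+1)) (by omega) 1 (Or.inl rfl),
        iter_deriv_W_root n (n - (j+1)) (by omega) (-1) (Or.inr rfl)]
    rw [← Function.iterate_succ_apply' derivative]
    ring

lemma W_eq (n : ℕ) :
    W n = ∑ k ∈ Finset.range (n + 1), C ((-1 : ℝ) ^ k * n.choose k) * X ^ (2 * k) := by
  rw [W, sub_eq_add_neg, add_comm, add_pow]
  refine Finset.sum_congr rfl fun k _ => ?_
  rw [one_pow, mul_one, neg_pow, ← pow_mul]
  rw [← C_eq_natCast, ← C_1 (R := ℝ), ← C_neg, ← C_pow, mul_right_comm, ← C_mul]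

lemma coeff_W (n j : ℕ) (hj : j ≤ n) :
    (W n).coeff (2 * j) = (-1 : ℝ) ^ j * n.choose j := by
  rw [W_eq, finset_sum_coeff]
  rw [Finset.sum_eq_single j]
  · rw [coeff_C_mul, coeff_X_pow, if_pos rfl, mul_one]
  · intro k _ hkj
    rw [coeff_C_mul, coeff_X_pow, if_neg (by omega), mul_zero]
  · intro h
    exact absurd (Finset.mem_range.mpr (by omega)) h

lemma natDegree_W (n : ℕ) : (W n).natDegree = 2 * n := by
  rw [W]
  have h2 : ((1 : Polynomial ℝ) - X ^ 2).natDegree = 2 := by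
    have : ((1 : Polynomial ℝ) - X ^ 2) = -(X ^ 2 - C 1) := by rw [C_1]; ring
    rw [this, natDegree_neg, natDegree_X_pow_sub_C]
  rw [natDegree_pow, h2]; ring

lemma iter_deriv_W_2n (n : ℕ) (x : ℝ) :
    (derivative^[2 * n] (W n)).eval x = (-1 : ℝ) ^ n * (2 * n).factorial := by
  have hdeg : (derivative^[2 * n] (W n)).natDegree = 0 := by
    have := natDegree_iterate_derivative (W n) (2 * n)
    rw [natDegree_W] at this
    omega
  obtain ⟨a, ha⟩ := natDegree_eq_zero.mp hdeg
  have hcoeff : (derivative^[2 * n] (W n)).coeff 0 = (-1 : ℝ) ^ n * (2 * n).factorial := by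
    rw [coeff_iterate_derivative, zero_add, Nat.descFactorial_self, coeff_W n n le_rfl]
    simp [mul_comm]
  rw [← ha] at hcoeff ⊢
  simp only [coeff_C] at hcoeff
  simpa using hcoeff


lemma orth (n : ℕ) (p : Polynomial ℝ) (hp : p.natDegree < n) :
    ∫ x in (-1:ℝ)..1, (Q n).eval x * p.eval x = 0 := by
  rw [key n p n le_rfl, iterate_derivative_eq_zero hp]
  simp

lemma normQ (n : ℕ) :
    ∫ x in (-1:ℝ)..1, ((Q n).eval x) ^ 2
      = (2 * n).factorial * ∫ x in (-1:ℝ)..1, (W n).eval x := by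
  have h1 : ∫ x in (-1:ℝ)..1, ((Q n).eval x) ^ 2
      = ∫ x in (-1:ℝ)..1, (Q n).eval x * (Q n).eval x :=
    intervalIntegral.integral_congr fun x _ => sq ((Q n).eval x)
  rw [h1, key n (Q n) n le_rfl, Nat.sub_self]
  have h2 : derivative^[n] (Q n) = derivative^[2*n] (W n) := by
    rw [Q, ← Function.iterate_add_apply]
    congr 1
    omega
  have h3 : ∫ x in (-1:ℝ)..1, (derivative^[0] (W n)).eval x * (derivative^[n] (Q n)).eval x
      = ((-1:ℝ)^n * (2*n).factorial) * ∫ x in (-1:ℝ)..1, (W n).eval x := by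
    rw [← intervalIntegral.integral_const_mul]
    apply intervalIntegral.integral_congr
    intro x _
    simp only [h2, iter_deriv_W_2n, Function.iterate_zero_apply]
    ring
  have h4 : (-1:ℝ)^n * (-1)^n = 1 := by rw [← mul_pow]; norm_num
  rw [h3]
  linear_combination (((2*n).factorial : ℝ) * ∫ x in (-1:ℝ)..1, (W n).eval x) * h4

lemma intW_le_two (n : ℕ) : ∫ x in (-1:ℝ)..1, (W n).eval x ≤ 2 := by
  have h : ∫ x in (-1:ℝ)..1, (W n).eval x ≤ ∫ _x in (-1:ℝ)..1, (1:ℝ) := by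
    apply intervalIntegral.integral_mono_on (by norm_num)
      ((W n).continuous.intervalIntegrable _ _)
      (intervalIntegrable_const)
    intro x hx
    rw [W_eval]
    apply pow_le_one₀
    · nlinarith [hx.1, hx.2]
    · nlinarith [hx.1, hx.2]
  norm_num at h
  linarith

lemma intW_pos (n : ℕ) : 0 < ∫ x in (-1:ℝ)..1, (W n).eval x := by
  apply intervalIntegral.intervalIntegral_pos_of_pos_on
    ((W n).continuous.intervalIntegrable _ _)
  · intro x hx
    rw [W_eval]
    apply pow_pos
    nlinarith [hx.1, hx.2]
  · norm_num

lemma deriv_integral (P : Polynomial ℝ) (a b : ℝ) :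
    ∫ x in a..b, (derivative P).eval x = P.eval b - P.eval a :=
  intervalIntegral.integral_eq_sub_of_hasDerivAt (fun x _ => P.hasDerivAt x)
    ((derivative P).continuous.intervalIntegrable a b)

lemma moment (n : ℕ) (hn : 2 ≤ n) :
    ∫ x in (0:ℝ)..1, x * (Q n).eval x = (derivative^[n-2] (W n)).eval 0 := by
  have hQ : Q n = derivative (derivative^[n-1] (W n)) := by
    rw [Q]; exact iter_succ' (W n) n (by omega)
  have h := intervalIntegral.integral_mul_deriv_eq_deriv_mul
    (u := fun x => x) (u' := fun _ => (1:ℝ))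
    (v := fun x => (derivative^[n-1] (W n)).eval x) (v' := fun x => (Q n).eval x)
    (fun x _ => hasDerivAt_id x)
    (fun x _ => by rw [hQ]; exact (derivative^[n-1] (W n)).hasDerivAt x)
    (intervalIntegrable_const) ((Q n).continuous.intervalIntegrable _ _)
    (a := 0) (b := 1)
  rw [h, iter_deriv_W_root n (n-1) (by omega) 1 (Or.inl rfl)]
  have h2 : derivative^[n-1] (W n) = derivative (derivative^[n-2] (W n)) := by
    have := iter_succ' (W n) (n-1) (by omega)
    rwa [show n - 1 - 1 = n - 2 from by omega] at this
  have h3 : ∫ x in (0:ℝ)..1, (1:ℝ) * (derivative^[n-1] (W n)).eval x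
      = (derivative^[n-2] (W n)).eval 1 - (derivative^[n-2] (W n)).eval 0 := by
    rw [intervalIntegral.integral_congr
      (g := fun x => (derivative^[n-1] (W n)).eval x) (fun x _ => one_mul _), h2,
      deriv_integral]
  rw [h3, iter_deriv_W_root n (n-2) (by omega) 1 (Or.inl rfl)]
  ring

lemma relu_moment (n : ℕ) (hn : 2 ≤ n) :
    ∫ x in (-1:ℝ)..1, (max x 0) * (Q n).eval x = (derivative^[n-2] (W n)).eval 0 := by
  have hsplit : ∫ x in (-1:ℝ)..1, (max x 0) * (Q n).eval x
      = (∫ x in (-1:ℝ)..0, (max x 0) * (Q n).eval x)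
        + ∫ x in (0:ℝ)..1, (max x 0) * (Q n).eval x := by
    rw [intervalIntegral.integral_add_adjacent_intervals] <;>
    · apply Continuous.intervalIntegrable
      exact (continuous_id.max continuous_const).mul (Q n).continuous
  have h1 : ∫ x in (-1:ℝ)..0, (max x 0) * (Q n).eval x = 0 := by
    rw [intervalIntegral.integral_congr (g := fun _ => (0:ℝ))]
    · simp
    · intro x hx
      have : x ≤ 0 := by
        rcases (Set.mem_uIcc.mp hx) with h | h
        · exact h.2
        · linarith [h.2, h.1]
      simp [max_eq_right this]
  have h2 : ∫ x in (0:ℝ)..1, (max x 0) * (Q n).eval x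
      = ∫ x in (0:ℝ)..1, x * (Q n).eval x := by
    apply intervalIntegral.integral_congr
    intro x hx
    have : 0 ≤ x := by
      rcases (Set.mem_uIcc.mp hx) with h | h
      · exact h.1
      · linarith [h.1, h.2]
    simp only [max_eq_left this]
  rw [hsplit, h1, h2, moment n hn, zero_add]


lemma cauchy_schwarz (f g : ℝ → ℝ) (hf : Continuous f) (hg : Continuous g) :
    (∫ x in (-1:ℝ)..1, f x * g x) ^ 2
      ≤ (∫ x in (-1:ℝ)..1, f x ^ 2) * ∫ x in (-1:ℝ)..1, g x ^ 2 := by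
  set I0 := ∫ x in (-1:ℝ)..1, f x ^ 2 with hI0
  set I1 := ∫ x in (-1:ℝ)..1, f x * g x with hI1
  set I2 := ∫ x in (-1:ℝ)..1, g x ^ 2 with hI2
  have hq : ∀ t : ℝ, 0 ≤ I2 * (t * t) + (2 * I1) * t + I0 := by
    intro t
    have iA : IntervalIntegrable (fun x => (t*t) * g x ^ 2) volume (-1) 1 :=
      (continuous_const.mul (hg.pow 2)).intervalIntegrable _ _
    have iB : IntervalIntegrable (fun x => (2*t) * (f x * g x)) volume (-1) 1 :=
      (continuous_const.mul (hf.mul hg)).intervalIntegrable _ _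
    have iC : IntervalIntegrable (fun x => f x ^ 2) volume (-1) 1 :=
      ((hf.pow 2)).intervalIntegrable _ _
    have hexp : ∫ x in (-1:ℝ)..1, (t * g x + f x) ^ 2
        = I2 * (t * t) + (2 * I1) * t + I0 := by
      rw [intervalIntegral.integral_congr
        (g := fun x => (t*t) * g x ^ 2 + (2*t) * (f x * g x) + f x ^ 2)
        (fun x _ => by ring)]
      rw [intervalIntegral.integral_add (iA.add iB) iC,
          intervalIntegral.integral_add iA iB,
          intervalIntegral.integral_const_mul, intervalIntegral.integral_const_mul]
      rw [hI0, hI1, hI2]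
      ring
    rw [← hexp]
    apply intervalIntegral.integral_nonneg (by norm_num)
    intro x _
    positivity
  have hd := discrim_le_zero hq
  rw [discrim] at hd
  nlinarith [hd]

end Stmt15Aux

open Stmt15Aux in
set_option maxHeartbeats 1000000 in
/-- There are absolute constants `c, C > 0` such that every polynomial `p` of degree at
most `k` satisfies `∫_{-1}^{1} (ReLU(z) - p(z))² dz ≥ c k^(-C)`. -/
theorem stmt15 :
    ∃ c C : ℝ, 0 < c ∧ 0 < C ∧ ∀ k : ℕ, 0 < k → ∀ p : Polynomial ℝ, p.degree ≤ k →
      c * (k : ℝ) ^ (-C) ≤ ∫ z in (-1 : ℝ)..1, (max z 0 - p.eval z) ^ 2 := by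
  refine ⟨1/32768, 6, by norm_num, by norm_num, ?_⟩
  intro k hk p hdeg
  set m : ℕ := k / 2 with hm
  set n : ℕ := 2 * m + 2 with hn
  have hn2 : 2 ≤ n := by omega
  have hkn : k < n := by omega
  have hdegn : p.natDegree < n :=
    lt_of_le_of_lt (Polynomial.natDegree_le_iff_degree_le.mpr hdeg) hkn
  -- the test polynomial and the moment
  set A : ℝ := (derivative^[n-2] (W n)).eval 0 with hAdef
  set F : ℝ := ((n-2).factorial : ℝ) with hF
  set G : ℝ := (n.choose m : ℝ) with hG
  set N : ℝ := (n : ℝ) with hN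
  set K : ℝ := (k : ℝ) with hK
  have hA : A = F * ((-1:ℝ)^m * G) := by
    rw [hAdef, ← coeff_zero_eq_eval_zero, coeff_iterate_derivative, zero_add,
        Nat.descFactorial_self, show n - 2 = 2 * m from by omega, coeff_W n m (by omega),
        nsmul_eq_mul]
    rw [hF, hG, show n - 2 = 2*m from by omega]
  have hA2 : A ^ 2 = F^2 * G^2 := by
    have hs : ((-1:ℝ)^m)^2 = 1 := by
      rw [← pow_mul, mul_comm, pow_mul]
      norm_num
    rw [hA]
    linear_combination (F^2*G^2) * hs
  -- continuity
  have hcontf : Continuous fun x : ℝ => max x 0 - p.eval x :=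
    (continuous_id.max continuous_const).sub p.continuous
  have hcontg : Continuous fun x : ℝ => (Q n).eval x := (Q n).continuous
  -- I1 = A
  have hI1 : ∫ x in (-1:ℝ)..1, (max x 0 - p.eval x) * (Q n).eval x = A := by
    rw [intervalIntegral.integral_congr
      (g := fun x => (max x 0) * (Q n).eval x - (Q n).eval x * p.eval x)
      (fun x _ => by ring)]
    have int1 : IntervalIntegrable (fun x : ℝ => max x 0 * (Q n).eval x) volume (-1) 1 :=
      ((continuous_id.max continuous_const).mul hcontg).intervalIntegrable _ _
    have int2 : IntervalIntegrable (fun x : ℝ => (Q n).eval x * p.eval x) volume (-1) 1 :=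
      (hcontg.mul p.continuous).intervalIntegrable _ _
    rw [intervalIntegral.integral_sub int1 int2, relu_moment n hn2, orth n p hdegn, sub_zero]
  -- I2 bounds
  set I2 : ℝ := ∫ x in (-1:ℝ)..1, ((Q n).eval x) ^ 2 with hI2def
  have hI2eq : I2 = (2*n).factorial * ∫ x in (-1:ℝ)..1, (W n).eval x := normQ n
  have hI2pos : 0 < I2 := by
    rw [hI2eq]
    exact mul_pos (by positivity) (intW_pos n)
  have hI2le : I2 ≤ 2 * (2*n).factorial := by
    rw [hI2eq, mul_comm (2:ℝ) _]
    exact mul_le_mul_of_nonneg_left (intW_le_two n) (by positivity)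
  -- Cauchy–Schwarz
  set I0 : ℝ := ∫ x in (-1:ℝ)..1, (max x 0 - p.eval x) ^ 2 with hI0def
  have hI0nonneg : 0 ≤ I0 := by
    apply intervalIntegral.integral_nonneg (by norm_num)
    intro x _
    positivity
  have hcs : A ^ 2 ≤ I0 * I2 := by
    have := cauchy_schwarz (fun x => max x 0 - p.eval x) (fun x => (Q n).eval x)
      hcontf hcontg
    rwa [hI1] at this
  have hmain : A ^ 2 ≤ I0 * (2 * (2*n).factorial) :=
    le_trans hcs (mul_le_mul_of_nonneg_left hI2le hI0nonneg)
  -- nat combinatorial facts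
  have nat1 : 2^n ≤ 2*(n+1) * n.choose m := by
    have d1 := Nat.four_pow_le_two_mul_self_mul_centralBinom (m+1) (by omega)
    rw [Nat.centralBinom, show 2*(m+1) = n from by omega] at d1
    have d2 : n.choose (m+1) * (m+1) = n.choose m * (n - m) := Nat.choose_succ_right_eq n m
    rw [show n - m = m + 2 from by omega] at d2
    have d3 : 2^n = 4^(m+1) := by
      rw [show (4:ℕ) = 2^2 from rfl, ← pow_mul, show 2*(m+1) = n from by omega]
    calc 2^n = 4^(m+1) := d3
      _ ≤ 2*(m+1) * n.choose (m+1) := d1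
      _ = 2*(n.choose (m+1) * (m+1)) := by ring
      _ = 2*(n.choose m * (m+2)) := by rw [d2]
      _ ≤ 2*(n.choose m * (n+1)) := by
          have : m + 2 ≤ n + 1 := by omega
          exact Nat.mul_le_mul_left _ (Nat.mul_le_mul_left _ this)
      _ = 2*(n+1) * n.choose m := by ring
  have nat2 : (2*n).factorial ≤ 4^n * (n.factorial * n.factorial) := by
    have c1 : (2*n).choose n ≤ 4^n := by
      have hsum := Nat.sum_range_choose (2*n)
      have hmem : n ∈ Finset.range (2*n + 1) := Finset.mem_range.mpr (by omega)
      have hle : (2*n).choose n ≤ ∑ i ∈ Finset.range (2*n+1), (2*n).choose i :=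
        Finset.single_le_sum (fun i _ => Nat.zero_le _) hmem
      rw [hsum] at hle
      calc (2*n).choose n ≤ 2^(2*n) := hle
        _ = 4^n := by rw [show (4:ℕ) = 2^2 from rfl, ← pow_mul]
    have c2 : (2*n).choose n * n.factorial * n.factorial = (2*n).factorial := by
      have := Nat.choose_mul_factorial_mul_factorial (show n ≤ 2*n by omega)
      rwa [show 2*n - n = n from by omega] at this
    calc (2*n).factorial = (2*n).choose n * n.factorial * n.factorial := c2.symm
      _ ≤ 4^n * n.factorial * n.factorial := by
          exact Nat.mul_le_mul_right _ (Nat.mul_le_mul_right _ c1)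
      _ = 4^n * (n.factorial * n.factorial) := by ring
  have nat3 : n.factorial = n * ((n-1) * (n-2).factorial) := by
    obtain ⟨l, hl⟩ : ∃ l, n = l + 2 := ⟨n-2, by omega⟩
    rw [hl, show l + 2 - 1 = l + 1 from by omega, show l + 2 - 2 = l from by omega]
    rw [Nat.factorial_succ, Nat.factorial_succ]
  -- real versions
  have f1 : (2:ℝ)^n ≤ 2*(N+1)*G := by
    rw [hN, hG]
    exact_mod_cast nat1
  have f2 : ((2*n).factorial : ℝ) ≤ 4^n * (N*((N-1)*F))^2 := by
    have hcast : ((n:ℝ) - 1) = ((n-1 : ℕ) : ℝ) := by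
      have : 1 ≤ n := by omega
      push_cast [this]
      ring
    rw [hN, hF, hcast]
    calc ((2*n).factorial : ℝ) ≤ 4^n * ((n.factorial : ℝ) * (n.factorial : ℝ)) := by
          exact_mod_cast nat2
      _ = 4^n * ((n:ℝ)*(((n-1:ℕ):ℝ)*((n-2).factorial : ℝ)))^2 := by
          rw [show ((n.factorial : ℝ)) = ((n:ℝ)*(((n-1:ℕ):ℝ)*((n-2).factorial:ℝ))) from by
            exact_mod_cast congrArg (Nat.cast : ℕ → ℝ) nat3]
          ring
  have hGpos : 0 < G := by
    rw [hG]
    exact_mod_cast Nat.choose_pos (show m ≤ n by omega)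
  have hFpos : 0 < F := by rw [hF]; exact_mod_cast Nat.factorial_pos _
  have hKge1 : 1 ≤ K := by rw [hK]; exact_mod_cast hk
  have hNge2 : 2 ≤ N := by rw [hN]; exact_mod_cast hn2
  have hNK : N + 1 ≤ 4*K := by
    rw [hN, hK]
    have h1 : (n:ℝ) ≤ (k:ℝ) + 2 := by exact_mod_cast (show n ≤ k + 2 by omega)
    have h2 : (1:ℝ) ≤ (k:ℝ) := by exact_mod_cast hk
    linarith
  -- final arithmetic
  have h2n : ((2:ℝ)^n)^2 = 4^n := by
    rw [← pow_mul, mul_comm n 2, pow_mul]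
    norm_num
  have s1 : (4:ℝ)^n ≤ (2*(N+1)*G)^2 := by
    rw [← h2n]
    exact pow_le_pow_left₀ (by positivity) f1 2
  have hD : (2:ℝ)*(2*n).factorial ≤ 8*(N+1)^2*G^2*(N*((N-1)*F))^2 := by
    calc (2:ℝ)*(2*n).factorial ≤ 2*(4^n * (N*((N-1)*F))^2) := by linarith [f2]
      _ ≤ 2*((2*(N+1)*G)^2 * (N*((N-1)*F))^2) := by
          have := mul_le_mul_of_nonneg_right s1 (sq_nonneg (N*((N-1)*F)))
          linarith
      _ = 8*(N+1)^2*G^2*(N*((N-1)*F))^2 := by ring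
  have hstep : F^2*G^2 ≤ I0 * (8*(N+1)^2*G^2*(N*((N-1)*F))^2) := by
    calc F^2*G^2 = A^2 := hA2.symm
      _ ≤ I0 * (2*(2*n).factorial) := hmain
      _ ≤ I0 * (8*(N+1)^2*G^2*(N*((N-1)*F))^2) := mul_le_mul_of_nonneg_left hD hI0nonneg
  have hstep' : 1 * (F^2*G^2) ≤ (I0*(8*(N+1)^2*(N*(N-1))^2)) * (F^2*G^2) := by
    have e : (I0*(8*(N+1)^2*(N*(N-1))^2)) * (F^2*G^2)
        = I0 * (8*(N+1)^2*G^2*(N*((N-1)*F))^2) := by ring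
    rw [one_mul, e]
    exact hstep
  have hone : 1 ≤ I0*(8*(N+1)^2*(N*(N-1))^2) := by
    have hpos : 0 < F^2*G^2 := by positivity
    nlinarith [hstep', hpos]
  have h1 : N*(N-1) ≤ (N+1)^2 := by nlinarith
  have h0 : 0 ≤ N*(N-1) := by nlinarith
  have h2 : (N*(N-1))^2 ≤ ((N+1)^2)^2 := pow_le_pow_left₀ h0 h1 2
  have h3 : (N+1)^6 ≤ (4*K)^6 := pow_le_pow_left₀ (by linarith) hNK 6
  have hpoly : 8*(N+1)^2*(N*(N-1))^2 ≤ 32768*K^6 := by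
    calc 8*(N+1)^2*(N*(N-1))^2 ≤ 8*(N+1)^2*((N+1)^2)^2 := by nlinarith [h2, sq_nonneg (N+1)]
      _ = 8*(N+1)^6 := by ring
      _ ≤ 8*(4*K)^6 := by linarith [h3]
      _ = 32768*K^6 := by ring
  have hfinal : 1 ≤ I0 * (32768*K^6) :=
    le_trans hone (mul_le_mul_of_nonneg_left hpoly hI0nonneg)
  have hrpow : K ^ (-(6:ℝ)) = (K^(6:ℕ))⁻¹ := by
    rw [Real.rpow_neg (by linarith : (0:ℝ) ≤ K),
        show (6:ℝ) = ((6:ℕ):ℝ) from by norm_num, Real.rpow_natCast]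
  rw [hrpow, show (1:ℝ)/32768 * ((K^(6:ℕ))⁻¹) = 1/(32768*K^6) from by ring,
      div_le_iff₀ (by positivity)]
  exact hfinal
end
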